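/- arXiv:2304.11456 — 7 statements merged into one kernel-verified Lean document; each statement's English description precedes it below -/
import Mathlib

section
/- For every x ∈ ℝ^d, the subdifferential of g_K at x equals the convex hull of the optimality class of x: ∂g_K(x) = conv(opt_K(x)). -/
open scoped RealInnerProductSpace
open Metric Set

noncomputable section

lemma pad_sum {M : Type*} [AddCommMonoid M] {k n : ℕ} (hkn : k ≤ n) (f : Fin k → M) :
    (∑ j : Fin n, if h : (j : ℕ) < k then f ⟨j, h⟩ else 0) = ∑ j : Fin k, f j := by
  calc (∑ j : Fin n, if h : (j : ℕ) < k then f ⟨j, h⟩ else 0)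
      = ∑ m ∈ Finset.range n, (if h : m < k then f ⟨m, h⟩ else 0) :=
        Fin.sum_univ_eq_sum_range (fun m => if h : m < k then f ⟨m, h⟩ else 0) n
    _ = ∑ m ∈ Finset.range k, (if h : m < k then f ⟨m, h⟩ else 0) :=
        (Finset.sum_subset (Finset.range_subset_range.mpr hkn) (by
          intro m _ hm
          rw [Finset.mem_range, not_lt] at hm
          rw [dif_neg (not_lt.mpr hm)])).symm
    _ = ∑ j : Fin k, (if h : (j : ℕ) < k then f ⟨(j : ℕ), h⟩ else 0) :=
        (Fin.sum_univ_eq_sum_range (fun m => if h : m < k then f ⟨m, h⟩ else 0) k).symm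
    _ = ∑ j : Fin k, f j := by
        apply Finset.sum_congr rfl
        intro j _
        rw [dif_pos j.isLt]

lemma isCompact_convexHull_fd {d : ℕ} {s : Set (EuclideanSpace ℝ (Fin d))} (hs : IsCompact s) :
    IsCompact (convexHull ℝ s) := by
  rcases s.eq_empty_or_nonempty with rfl | ⟨s₀, hs₀⟩
  · simp
  set n := d + 1 with hn
  set F : (Fin n → ℝ) × (Fin n → EuclideanSpace ℝ (Fin d)) → EuclideanSpace ℝ (Fin d) :=
    fun p => ∑ i, p.1 i • p.2 i with hF
  have hFc : Continuous F := by
    apply continuous_finset_sum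
    intro i _
    exact ((continuous_apply i).comp continuous_fst).smul
      ((continuous_apply i).comp continuous_snd)
  have hT : IsCompact ((stdSimplex ℝ (Fin n)) ×ˢ (Set.univ.pi fun _ : Fin n => s)) :=
    IsCompact.prod (by apply isCompact_stdSimplex) (isCompact_univ_pi fun _ => hs)
  have him : convexHull ℝ s = F '' ((stdSimplex ℝ (Fin n)) ×ˢ (Set.univ.pi fun _ : Fin n => s)) := by
    apply Subset.antisymm
    · intro x hx
      obtain ⟨ι, hι, z, w, hzs, hai, hwpos, hwsum, hwz⟩ :=
        eq_pos_convex_span_of_mem_convexHull hx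
      have hcard : Fintype.card ι ≤ n := by
        have h1 := hai.card_le_finrank_succ
        have h2 := Submodule.finrank_le (vectorSpan ℝ (Set.range z))
        rw [finrank_euclideanSpace_fin] at h2
        omega
      set k := Fintype.card ι with hk
      have e : ι ≃ Fin k := Fintype.equivFin ι
      refine ⟨(fun j => if h : (j : ℕ) < k then w (e.symm ⟨j, h⟩) else 0,
        fun j => if h : (j : ℕ) < k then z (e.symm ⟨j, h⟩) else s₀), ⟨?_, ?_⟩, ?_⟩
      · constructor
        · intro j
          dsimp only
          split
          · exact (hwpos _).le
          · exact le_refl 0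
        · rw [pad_sum hcard (fun j => w (e.symm j))]
          rw [← hwsum]
          exact Equiv.sum_comp e.symm w
      · intro j _
        dsimp only
        split
        · exact hzs ⟨_, rfl⟩
        · exact hs₀
      · show F _ = x
        rw [hF]
        dsimp only
        have : (∑ j : Fin n, (if h : (j : ℕ) < k then w (e.symm ⟨j, h⟩) else 0) •
            (if h : (j : ℕ) < k then z (e.symm ⟨j, h⟩) else s₀)) =
            ∑ j : Fin n, if h : (j : ℕ) < k then w (e.symm ⟨j, h⟩) • z (e.symm ⟨j, h⟩) else 0 := by
          apply Finset.sum_congr rfl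
          intro j _
          split
          · rfl
          · simp
        rw [this, pad_sum hcard (fun j => w (e.symm j) • z (e.symm j))]
        rw [← hwz]
        exact Equiv.sum_comp e.symm (fun i => w i • z i)
    · rintro _ ⟨⟨wv, zv⟩, ⟨⟨hw0, hw1⟩, hz⟩, rfl⟩
      apply (convex_convexHull ℝ s).sum_mem (fun i _ => hw0 i) hw1
      intro i _
      exact subset_convexHull ℝ s (hz i (mem_univ i))
  rw [him]
  exact hT.image hFc

/-- The optimality class of `x` w.r.t. `K`: the points of `K` at minimal distance from `x`. -/
def optClass {d : ℕ} (K : Set (EuclideanSpace ℝ (Fin d))) (x : EuclideanSpace ℝ (Fin d)) :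
    Set (EuclideanSpace ℝ (Fin d)) :=
  {y ∈ K | dist x y = Metric.infDist x K}

/-- The subdifferential of a convex function `g : ℝ^d → ℝ` at `x`. -/
def subdiff {d : ℕ} (g : EuclideanSpace ℝ (Fin d) → ℝ) (x : EuclideanSpace ℝ (Fin d)) :
    Set (EuclideanSpace ℝ (Fin d)) :=
  {ξ | ∀ y, g x + ⟪ξ, y - x⟫ ≤ g y}

/-- The convex function `g_K(x) = -dist_K(x)²/2 + ‖x‖²/2` has subdifferential
`∂g_K(x) = conv(opt_K(x))`. -/
theorem subdiff_gK_eq {d : ℕ} (K : Set (EuclideanSpace ℝ (Fin d))) (hKne : K.Nonempty)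
    (hKcl : IsClosed K) (x : EuclideanSpace ℝ (Fin d)) :
    subdiff (fun y => -(Metric.infDist y K ^ 2) / 2 + ‖y‖ ^ 2 / 2) x =
      convexHull ℝ (optClass K x) := by
  set g : EuclideanSpace ℝ (Fin d) → ℝ :=
    fun y => -(Metric.infDist y K ^ 2) / 2 + ‖y‖ ^ 2 / 2 with hg
  -- basic algebraic identity
  have hid : ∀ z y : EuclideanSpace ℝ (Fin d),
      -(dist z y ^ 2) / 2 + ‖z‖ ^ 2 / 2 = ⟪z, y⟫ - ‖y‖ ^ 2 / 2 := by
    intro z y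
    rw [dist_eq_norm, norm_sub_sq_real]
    ring
  -- lower bound
  have hA : ∀ (z : EuclideanSpace ℝ (Fin d)), ∀ y ∈ K, ⟪z, y⟫ - ‖y‖ ^ 2 / 2 ≤ g z := by
    intro z y hy
    have h1 : infDist z K ≤ dist z y := infDist_le_dist_of_mem hy
    have h2 : 0 ≤ infDist z K := infDist_nonneg
    have h3 : infDist z K ^ 2 ≤ dist z y ^ 2 := by nlinarith
    rw [hg, ← hid z y]
    dsimp only
    linarith
  -- equality on the optimality class
  have hB : ∀ (z : EuclideanSpace ℝ (Fin d)), ∀ y ∈ optClass K z,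
      g z = ⟪z, y⟫ - ‖y‖ ^ 2 / 2 := by
    intro z y hy
    obtain ⟨hyK, hyd⟩ := hy
    show -(infDist z K ^ 2) / 2 + ‖z‖ ^ 2 / 2 = _
    rw [← hyd, hid z y]
  apply Subset.antisymm
  · -- subdiff ⊆ convexHull
    intro ξ hξ
    by_contra hnot
    -- compactness of the optimality class
    obtain ⟨y₀, hy₀K, hy₀d⟩ := hKcl.exists_infDist_eq_dist hKne x
    have hoc : IsClosed (optClass K x) := by
      have : optClass K x = K ∩ {y | dist x y = infDist x K} := rfl
      rw [this]
      exact hKcl.inter (isClosed_eq (continuous_const.dist continuous_id) continuous_const)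
    have hob : Bornology.IsBounded (optClass K x) := by
      apply (Metric.isBounded_closedBall (x := x) (r := infDist x K)).subset
      intro y hy
      rw [Metric.mem_closedBall, dist_comm]
      exact hy.2.le
    have hocpt : IsCompact (optClass K x) := Metric.isCompact_of_isClosed_isBounded hoc hob
    have hch : IsCompact (convexHull ℝ (optClass K x)) := isCompact_convexHull_fd hocpt
    obtain ⟨f, u, hfu, huξ⟩ := geometric_hahn_banach_closed_point
      (convex_convexHull ℝ (optClass K x)) hch.isClosed hnot
    set v := (InnerProductSpace.toDual ℝ (EuclideanSpace ℝ (Fin d))).symm f with hv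
    have hvf : ∀ w, ⟪v, w⟫ = f w := fun w => InnerProductSpace.toDual_symm_apply
    -- nearest points for the perturbed points
    have hex : ∀ n : ℕ, ∃ y ∈ K,
        infDist (x + ((1 : ℝ) / (n + 1)) • v) K = dist (x + ((1 : ℝ) / (n + 1)) • v) y :=
      fun n => hKcl.exists_infDist_eq_dist hKne _
    choose y hyK hyd using hex
    set t : ℕ → ℝ := fun n => (1 : ℝ) / (n + 1) with ht
    have htpos : ∀ n, 0 < t n := fun n => by positivity
    have htle : ∀ n, t n ≤ 1 := fun n => by
      rw [ht]
      rw [div_le_one (by positivity)]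
      exact le_add_of_nonneg_left (Nat.cast_nonneg n)
    -- the key inequality
    have hkey : ∀ n, ⟪ξ, v⟫ ≤ ⟪v, y n⟫ := by
      intro n
      have h1 := hξ (x + t n • v)
      have h2 : g (x + t n • v) = ⟪x + t n • v, y n⟫ - ‖y n‖ ^ 2 / 2 :=
        hB _ _ ⟨hyK n, (hyd n).symm⟩
      have h3 : ⟪x + t n • v, y n⟫ = ⟪x, y n⟫ + t n * ⟪v, y n⟫ := by
        rw [inner_add_left, real_inner_smul_left]
      have h4 : ⟪x, y n⟫ - ‖y n‖ ^ 2 / 2 ≤ g x := hA x (y n) (hyK n)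
      have h5 : ⟪ξ, (x + t n • v) - x⟫ = t n * ⟪ξ, v⟫ := by
        rw [add_sub_cancel_left, real_inner_smul_right]
      rw [h5] at h1
      have h6 : t n * ⟪ξ, v⟫ ≤ t n * ⟪v, y n⟫ := by
        have : g x + t n * ⟪ξ, v⟫ ≤ g (x + t n • v) := h1
        rw [h2, h3] at this
        linarith
      exact le_of_mul_le_mul_left (by linarith [h6]) (htpos n)
    -- boundedness of the sequence
    have hbd : ∀ n, y n ∈ Metric.closedBall x (infDist x K + 2 * ‖v‖) := by
      intro n
      rw [Metric.mem_closedBall]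
      have h1 : dist (y n) x ≤ dist (y n) (x + t n • v) + dist (x + t n • v) x :=
        dist_triangle _ _ _
      have h2 : dist (x + t n • v) x = t n * ‖v‖ := by
        rw [dist_eq_norm, add_sub_cancel_left, norm_smul, Real.norm_eq_abs,
          abs_of_pos (htpos n)]
      have h3 : dist (y n) (x + t n • v) = infDist (x + t n • v) K := by
        rw [dist_comm]; exact (hyd n).symm
      have h4 : infDist (x + t n • v) K ≤ infDist x K + dist (x + t n • v) x :=
        infDist_le_infDist_add_dist
      have h5 : t n * ‖v‖ ≤ ‖v‖ := by
        have := htle n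
        nlinarith [norm_nonneg v, (htpos n).le]
      calc dist (y n) x ≤ infDist (x + t n • v) K + t n * ‖v‖ := by rw [← h2, ← h3]; exact h1
        _ ≤ infDist x K + t n * ‖v‖ + t n * ‖v‖ := by rw [h2] at h4; linarith
        _ ≤ infDist x K + 2 * ‖v‖ := by linarith
    -- extract a convergent subsequence
    obtain ⟨ystar, hystar, φ, hφ, hconv⟩ :=
      (isCompact_closedBall x (infDist x K + 2 * ‖v‖)).tendsto_subseq hbd
    -- the perturbed points converge to x
    have htt : Filter.Tendsto t Filter.atTop (nhds 0) := tendsto_one_div_add_atTop_nhds_zero_nat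
    have httφ : Filter.Tendsto (t ∘ φ) Filter.atTop (nhds 0) :=
      htt.comp hφ.tendsto_atTop
    have hpt : Filter.Tendsto (fun n => x + t (φ n) • v) Filter.atTop (nhds x) := by
      have : Filter.Tendsto (fun n => x + t (φ n) • v) Filter.atTop (nhds (x + (0 : ℝ) • v)) :=
        Filter.Tendsto.add tendsto_const_nhds (httφ.smul_const v)
      simpa using this
    -- the limit is in the optimality class
    have hyKstar : ystar ∈ K := hKcl.mem_of_tendsto hconv
      (Filter.Eventually.of_forall fun n => hyK (φ n))
    have hd1 : Filter.Tendsto (fun n => dist (x + t (φ n) • v) (y (φ n)))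
        Filter.atTop (nhds (dist x ystar)) := hpt.dist hconv
    have hd2 : Filter.Tendsto (fun n => dist (x + t (φ n) • v) (y (φ n)))
        Filter.atTop (nhds (infDist x K)) := by
      have : Filter.Tendsto (fun n => infDist (x + t (φ n) • v) K)
          Filter.atTop (nhds (infDist x K)) :=
        ((continuous_infDist_pt K).tendsto x).comp hpt
      convert this using 2 with n
      exact (hyd (φ n)).symm
    have hdstar : dist x ystar = infDist x K := tendsto_nhds_unique hd1 hd2
    have hstar : ystar ∈ optClass K x := ⟨hyKstar, hdstar⟩
    -- pass to the limit in the key inequality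
    have hlim : Filter.Tendsto (fun n => ⟪v, y (φ n)⟫) Filter.atTop (nhds ⟪v, ystar⟫) :=
      Filter.Tendsto.inner tendsto_const_nhds hconv
    have hfinal : ⟪ξ, v⟫ ≤ ⟪v, ystar⟫ :=
      ge_of_tendsto hlim (Filter.Eventually.of_forall fun n => hkey (φ n))
    -- contradiction with the separation
    have h7 : f ystar < u := hfu ystar (subset_convexHull ℝ _ hstar)
    have h8 : ⟪v, ystar⟫ = f ystar := hvf ystar
    have h9 : ⟪v, ξ⟫ = f ξ := hvf ξ
    have h10 : ⟪ξ, v⟫ = ⟪v, ξ⟫ := real_inner_comm _ _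
    linarith
  · -- convexHull ⊆ subdiff
    apply convexHull_min
    · intro y hy z
      have h1 : g x = ⟪x, y⟫ - ‖y‖ ^ 2 / 2 := hB x y hy
      have h2 : ⟪y, z - x⟫ = ⟪z, y⟫ - ⟪x, y⟫ := by
        rw [inner_sub_right, real_inner_comm y z, real_inner_comm y x]
      have h3 : ⟪z, y⟫ - ‖y‖ ^ 2 / 2 ≤ g z := hA z y hy.1
      show g x + ⟪y, z - x⟫ ≤ g z
      rw [h2, h1]
      linarith
    · intro ξ₁ hξ₁ ξ₂ hξ₂ a b ha hb hab
      intro z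
      have h1 : g x + ⟪ξ₁, z - x⟫ ≤ g z := hξ₁ z
      have h2 : g x + ⟪ξ₂, z - x⟫ ≤ g z := hξ₂ z
      have h3 : ⟪a • ξ₁ + b • ξ₂, z - x⟫ = a * ⟪ξ₁, z - x⟫ + b * ⟪ξ₂, z - x⟫ := by
        rw [inner_add_left, real_inner_smul_left, real_inner_smul_left]
      show g x + ⟪a • ξ₁ + b • ξ₂, z - x⟫ ≤ g z
      rw [h3]
      have h4 := mul_le_mul_of_nonneg_left h1 ha
      have h5 := mul_le_mul_of_nonneg_left h2 hb
      have h6 : a * g z + b * g z = g z := by rw [← add_mul, hab, one_mul]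
      have h7 : a * g x + b * g x = g x := by rw [← add_mul, hab, one_mul]
      nlinarith [h4, h5, h6, h7]
end
end

section
/- The point η_K(x) depends only on the optimality class of x: if x, y ∈ ℝ^d satisfy opt_K(x) = opt_K(y), then η_K(x) = η_K(y). -/
noncomputable section
open scoped RealInnerProductSpace
set_option maxHeartbeats 1000000

/-- `e` is the nearest point to `x` in the convex hull of the optimality class of `x`. -/
def IsNearestInOptHull {d : ℕ} (K : Set (EuclideanSpace ℝ (Fin d)))
    (x e : EuclideanSpace ℝ (Fin d)) : Prop :=
  e ∈ convexHull ℝ (optClass K x) ∧ ∀ z ∈ convexHull ℝ (optClass K x), dist x e ≤ dist x z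

/-- The point `η_K(x)` depends only on the optimality class of `x`. -/
theorem etaK_depends_only_on_optClass {d : ℕ} (K : Set (EuclideanSpace ℝ (Fin d)))
    (hKne : K.Nonempty) (hKcl : IsClosed K) (x y ηx ηy : EuclideanSpace ℝ (Fin d))
    (hopt : optClass K x = optClass K y)
    (hx : IsNearestInOptHull K x ηx) (hy : IsNearestInOptHull K y ηy) :
    ηx = ηy := by
  set S := optClass K x with hS
  set rx := Metric.infDist x K with hrx
  set ry := Metric.infDist y K with hry
  -- every z in convexHull S satisfies ‖x-z‖² - ‖y-z‖² = rx² - ry²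
  have key : ∀ z ∈ convexHull ℝ S, ‖x - z‖ ^ 2 - ‖y - z‖ ^ 2 = rx ^ 2 - ry ^ 2 := by
    have hsub : convexHull ℝ S ⊆
        {z : EuclideanSpace ℝ (Fin d) |
          ⟪x - y, z⟫ = (‖x‖ ^ 2 - ‖y‖ ^ 2 - (rx ^ 2 - ry ^ 2)) / 2} := by
      apply convexHull_min
      · intro s hs
        have hsx : dist x s = rx := hs.2
        have hsy : dist y s = ry := by
          have : s ∈ optClass K y := hopt ▸ hs
          exact this.2
        have h1 : ‖x - s‖ ^ 2 = rx ^ 2 := by rw [← hsx, dist_eq_norm]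
        have h2 : ‖y - s‖ ^ 2 = ry ^ 2 := by rw [← hsy, dist_eq_norm]
        have e1 : ‖x - s‖ ^ 2 = ‖x‖ ^ 2 - 2 * ⟪x, s⟫ + ‖s‖ ^ 2 :=
          norm_sub_sq_real x s
        have e2 : ‖y - s‖ ^ 2 = ‖y‖ ^ 2 - 2 * ⟪y, s⟫ + ‖s‖ ^ 2 :=
          norm_sub_sq_real y s
        have : ⟪x - y, s⟫ = ⟪x, s⟫ - ⟪y, s⟫ := inner_sub_left x y s
        simp only [Set.mem_setOf_eq, this]
        nlinarith [h1, h2, e1, e2]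
      · have : {z : EuclideanSpace ℝ (Fin d) |
            ⟪x - y, z⟫ = (‖x‖ ^ 2 - ‖y‖ ^ 2 - (rx ^ 2 - ry ^ 2)) / 2} =
            (innerSL ℝ (x - y)) ⁻¹' {(‖x‖ ^ 2 - ‖y‖ ^ 2 - (rx ^ 2 - ry ^ 2)) / 2} := by
          ext z
          simp only [Set.mem_setOf_eq, Set.mem_preimage, Set.mem_singleton_iff, innerSL_apply_apply]
        rw [this]
        exact (convex_singleton _).linear_preimage (innerSL ℝ (x - y)).toLinearMap
    intro z hz
    have hz' := hsub hz
    simp only [Set.mem_setOf_eq] at hz'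
    have e1 : ‖x - z‖ ^ 2 = ‖x‖ ^ 2 - 2 * ⟪x, z⟫ + ‖z‖ ^ 2 := norm_sub_sq_real x z
    have e2 : ‖y - z‖ ^ 2 = ‖y‖ ^ 2 - 2 * ⟪y, z⟫ + ‖z‖ ^ 2 := norm_sub_sq_real y z
    have : ⟪x - y, z⟫ = ⟪x, z⟫ - ⟪y, z⟫ := inner_sub_left x y z
    nlinarith [e1, e2, hz', this]
  obtain ⟨hηx, hxmin⟩ := hx
  obtain ⟨hηy, hymin⟩ := hy
  rw [← hopt] at hηy hymin
  -- dist x ηx = dist x ηy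
  have h1 : dist x ηx ≤ dist x ηy := hxmin ηy hηy
  have h2 : dist y ηy ≤ dist y ηx := hymin ηx hηx
  have kx := key ηx hηx
  have ky := key ηy hηy
  have hd : dist x ηx = dist x ηy := by
    apply le_antisymm h1
    have hsq : dist x ηy ^ 2 ≤ dist x ηx ^ 2 := by
      simp only [dist_eq_norm]
      have h2' : ‖y - ηy‖ ≤ ‖y - ηx‖ := by simpa [dist_eq_norm] using h2
      nlinarith [norm_nonneg (y - ηy), norm_nonneg (y - ηx)]
    nlinarith [dist_nonneg (x := x) (y := ηx), dist_nonneg (x := x) (y := ηy)]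
  -- midpoint argument
  have hmmem : (1/2 : ℝ) • ηx + (1/2 : ℝ) • ηy ∈ convexHull ℝ S :=
    (convex_convexHull ℝ S) hηx hηy (by norm_num) (by norm_num) (by norm_num)
  set m := (1/2 : ℝ) • ηx + (1/2 : ℝ) • ηy with hm
  have hml : dist x ηx ≤ dist x m := hxmin m hmmem
  have e1 : ‖(x - ηx) + (x - ηy)‖ ^ 2
      = ‖x - ηx‖ ^ 2 + 2 * ⟪x - ηx, x - ηy⟫ + ‖x - ηy‖ ^ 2 :=
    norm_add_sq_real _ _
  have e2 : ‖(x - ηx) - (x - ηy)‖ ^ 2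
      = ‖x - ηx‖ ^ 2 - 2 * ⟪x - ηx, x - ηy⟫ + ‖x - ηy‖ ^ 2 :=
    norm_sub_sq_real _ _
  have hsum : (x - ηx) + (x - ηy) = (2 : ℝ) • (x - m) := by
    rw [hm]; module
  have hdiff : (x - ηx) - (x - ηy) = ηy - ηx := by abel
  rw [hsum, norm_smul] at e1
  rw [hdiff] at e2
  have h2n : ‖(2 : ℝ)‖ = 2 := by norm_num
  rw [h2n] at e1
  have hxm : ‖x - ηx‖ ≤ ‖x - m‖ := by simpa [dist_eq_norm] using hml
  have hxy : ‖x - ηx‖ = ‖x - ηy‖ := by simpa [dist_eq_norm] using hd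
  have hz : ‖ηy - ηx‖ ^ 2 ≤ 0 := by
    nlinarith [norm_nonneg (x - ηx), norm_nonneg (x - m), e1, e2, hxm, hxy]
  have h0 : ‖ηy - ηx‖ = 0 := le_antisymm (by nlinarith [norm_nonneg (ηy - ηx)]) (norm_nonneg _)
  exact (sub_eq_zero.mp (norm_eq_zero.mp h0)).symm
end
end

section
/- Let H ⊆ K be such that the Voronoi cell V_H is nonempty. Then: V_H is a convex set; the direction (linear part) of the affine span A_H of H and the direction of the affine subspace B_H = {x ∈ ℝ^d : |x − p| = |x − q| for all p, q ∈ H} are orthogonal complements of each other in ℝ^d; A_H ∩ B_H consists of exactly one point p_H; and V_H is open in the subspace topology of B_H. -/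
noncomputable section

/-- The Voronoi cell of the optimality class `H ⊆ K`. -/
def voronoiCell {d : ℕ} (K H : Set (EuclideanSpace ℝ (Fin d))) :
    Set (EuclideanSpace ℝ (Fin d)) :=
  {x | optClass K x = H}

/-- The set `B_H` of points equidistant from all points of `H`. -/
def bisectorSet {d : ℕ} (H : Set (EuclideanSpace ℝ (Fin d))) :
    Set (EuclideanSpace ℝ (Fin d)) :=
  {x | ∀ p ∈ H, ∀ q ∈ H, dist x p = dist x q}

section Aux

open Metric EuclideanGeometry
open scoped RealInnerProductSpace

variable {d : ℕ}

local notation "E" => EuclideanSpace ℝ (Fin d)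

/-- Characterization of membership in a Voronoi cell. -/
lemma mem_voronoi_iff_aux (K H : Set E) (hKfin : K.Finite) (hKne : K.Nonempty)
    (hHK : H ⊆ K) {p₀ : E} (hp₀ : p₀ ∈ H) (x : E) :
    x ∈ voronoiCell K H ↔
      (∀ p ∈ H, dist x p = dist x p₀) ∧ (∀ q ∈ K, q ∉ H → dist x p₀ < dist x q) := by
  constructor
  · intro hx
    have hx' : optClass K x = H := hx
    have hp₀' : p₀ ∈ optClass K x := hx' ▸ hp₀
    have h1 : dist x p₀ = infDist x K := hp₀'.2
    refine ⟨fun p hp => ?_, fun q hq hqH => ?_⟩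
    · have hp' : p ∈ optClass K x := hx' ▸ hp
      rw [hp'.2, h1]
    · have hle : infDist x K ≤ dist x q := infDist_le_dist_of_mem hq
      rcases eq_or_lt_of_le (h1 ▸ hle) with heq | hlt
      · exact absurd (hx' ▸ (⟨hq, heq.symm.trans h1⟩ : q ∈ optClass K x)) hqH
      · exact hlt
  · rintro ⟨h1, h2⟩
    have hle : ∀ q ∈ K, dist x p₀ ≤ dist x q := by
      intro q hq
      by_cases hqH : q ∈ H
      · rw [h1 q hqH]
      · exact (h2 q hq hqH).le
    have hinf : infDist x K = dist x p₀ := by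
      refine le_antisymm (infDist_le_dist_of_mem (hHK hp₀)) ?_
      obtain ⟨y, hy, hyd⟩ := hKfin.isCompact.exists_infDist_eq_dist hKne x
      rw [hyd]; exact hle y hy
    show optClass K x = H
    ext y
    constructor
    · rintro ⟨hyK, hyd⟩
      by_contra hyH
      exact absurd (hyd.trans hinf).symm (ne_of_lt (h2 y hyK hyH))
    · intro hy
      exact ⟨hHK hy, by rw [h1 y hy, hinf]⟩

lemma halfspace_convex_aux (p q : E) : Convex ℝ {x : E | dist x p < dist x q} := by
  have hset : {x : E | dist x p < dist x q}
      = {x : E | inner ℝ x (q - p) < (‖q‖ ^ 2 - ‖p‖ ^ 2) / 2} := by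
    ext x
    simp only [Set.mem_setOf_eq, dist_eq_norm]
    rw [show ‖x - p‖ < ‖x - q‖ ↔ ‖x - p‖ ^ 2 < ‖x - q‖ ^ 2 from
      ⟨fun h => by nlinarith [norm_nonneg (x - p), norm_nonneg (x - q)],
       fun h => lt_of_pow_lt_pow_left₀ 2 (norm_nonneg _) h⟩]
    rw [norm_sub_sq_real, norm_sub_sq_real, inner_sub_right]
    constructor <;> intro h <;> linarith
  rw [hset]
  exact convex_halfSpace_lt ⟨fun a b => inner_add_left a b _, fun c a => real_inner_smul_left a _ c⟩ _

end Aux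

open Metric EuclideanGeometry AffineSubspace in
open scoped RealInnerProductSpace in
/-- Properties of the Voronoi partition: if `V_H ≠ ∅` then `V_H` is convex; `B_H` is an affine
subspace whose direction is the orthogonal complement of the direction of the affine span `A_H`
of `H` (and vice versa); `A_H ∩ B_H` consists of exactly one point `p_H`; and `V_H` is open in
the subspace topology of `B_H`. -/
theorem voronoi_partition_properties {d : ℕ} (hd : 1 ≤ d)
    (K : Set (EuclideanSpace ℝ (Fin d))) (hKfin : K.Finite) (hKne : K.Nonempty)
    (H : Set (EuclideanSpace ℝ (Fin d))) (hHK : H ⊆ K)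
    (hne : (voronoiCell K H).Nonempty) :
    Convex ℝ (voronoiCell K H) ∧
      (∃ B : AffineSubspace ℝ (EuclideanSpace ℝ (Fin d)),
        (B : Set (EuclideanSpace ℝ (Fin d))) = bisectorSet H ∧
        B.direction = (vectorSpan ℝ H)ᗮ ∧
        vectorSpan ℝ H = B.directionᗮ ∧
        (affineSpan ℝ H).direction = B.directionᗮ) ∧
      (∃! p : EuclideanSpace ℝ (Fin d), p ∈ affineSpan ℝ H ∧ p ∈ bisectorSet H) ∧
      IsOpen {y : bisectorSet H | (y : EuclideanSpace ℝ (Fin d)) ∈ voronoiCell K H} := by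
  obtain ⟨x₀, hx₀⟩ := hne
  -- H is nonempty
  have hHne : H.Nonempty := by
    obtain ⟨y, hy, hyd⟩ := hKfin.isCompact.exists_infDist_eq_dist hKne x₀
    exact ⟨y, hx₀ ▸ (⟨hy, hyd.symm⟩ : y ∈ optClass K x₀)⟩
  obtain ⟨p₀, hp₀⟩ := hHne
  have hchar := fun x => mem_voronoi_iff_aux K H hKfin hKne hHK hp₀ x
  obtain ⟨hx₀1, hx₀2⟩ := (hchar x₀).mp hx₀
  -- x₀ is in the bisector set
  have hx₀B : x₀ ∈ bisectorSet H := fun p hp q hq => (hx₀1 p hp).trans (hx₀1 q hq).symm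
  -- the affine subspace B
  set W : Submodule ℝ (EuclideanSpace ℝ (Fin d)) := (vectorSpan ℝ H)ᗮ with hW
  set B : AffineSubspace ℝ (EuclideanSpace ℝ (Fin d)) := AffineSubspace.mk' x₀ W with hB
  have hBcar : (B : Set (EuclideanSpace ℝ (Fin d))) = bisectorSet H := by
    ext x
    constructor
    · intro hx p hp q hq
      have hv : x -ᵥ x₀ ∈ W := (AffineSubspace.mem_mk').mp hx
      have hp' : ⟪(x -ᵥ x₀), (p -ᵥ p₀)⟫ = 0 :=
        (Submodule.mem_orthogonal' _ _).mp hv _ (vsub_mem_vectorSpan ℝ hp hp₀)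
      have hq' : ⟪(x -ᵥ x₀), (q -ᵥ p₀)⟫ = 0 :=
        (Submodule.mem_orthogonal' _ _).mp hv _ (vsub_mem_vectorSpan ℝ hq hp₀)
      -- dist x p = dist x q via expansion
      have key : ∀ r : EuclideanSpace ℝ (Fin d), r ∈ H → ⟪(x -ᵥ x₀), (r -ᵥ p₀)⟫ = 0 →
          dist x r ^ 2 = ‖x - x₀‖ ^ 2 + 2 * ⟪(x - x₀), (x₀ - r)⟫ + dist x₀ r ^ 2 := by
        intro r hr _
        have : x - r = (x - x₀) + (x₀ - r) := by abel
        rw [dist_eq_norm, dist_eq_norm, this, norm_add_sq_real]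
      have hrw : ∀ r : EuclideanSpace ℝ (Fin d),
          ⟪(x - x₀), (x₀ - r)⟫ = ⟪(x - x₀), (x₀ - p₀)⟫ - ⟪(x -ᵥ x₀), (r -ᵥ p₀)⟫ := by
        intro r
        have : (x₀ - r : EuclideanSpace ℝ (Fin d)) = (x₀ - p₀) - (r - p₀) := by abel
        rw [this, inner_sub_right]; rfl
      have h1 := key p hp hp'
      have h2 := key q hq hq'
      have e1 : dist x p ^ 2 = dist x q ^ 2 := by
        rw [h1, h2, hrw p, hrw q, hp', hq', hx₀B p hp q hq]
      have habs := (sq_eq_sq_iff_abs_eq_abs _ _).mp e1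
      rwa [abs_of_nonneg dist_nonneg, abs_of_nonneg dist_nonneg] at habs
    · intro hx
      rw [AffineSubspace.mem_coe, hB, AffineSubspace.mem_mk', hW,
        Submodule.mem_orthogonal]
      intro u hu
      rw [vectorSpan_eq_span_vsub_set_right ℝ hp₀] at hu
      induction hu using Submodule.span_induction with
      | mem v hv =>
          obtain ⟨q, hq, rfl⟩ := hv
          have h1 : dist q x₀ = dist p₀ x₀ := by
            rw [dist_comm q x₀, dist_comm p₀ x₀]; exact hx₀B q hq p₀ hp₀
          have h2 : dist q x = dist p₀ x := by
            rw [dist_comm q x, dist_comm p₀ x]; exact hx q hq p₀ hp₀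
          have := inner_vsub_vsub_of_dist_eq_of_dist_eq (c₁ := x₀) (c₂ := x)
            (p₁ := q) (p₂ := p₀) h1 h2
          rw [real_inner_comm]
          simpa using (by
            have : ⟪(x -ᵥ x₀), (p₀ -ᵥ q)⟫ = 0 := this
            have h3 : (q -ᵥ p₀ : EuclideanSpace ℝ (Fin d)) = -(p₀ -ᵥ q) := (neg_vsub_eq_vsub_rev p₀ q).symm
            rw [h3, inner_neg_right, this, neg_zero] : ⟪(x -ᵥ x₀), (q -ᵥ p₀)⟫ = 0)
      | zero => simp
      | add v w _ _ hv hw => rw [inner_add_left, hv, hw, add_zero]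
      | smul c v _ hv => rw [inner_smul_left, hv, mul_zero]
  have hBdir : B.direction = (vectorSpan ℝ H)ᗮ := AffineSubspace.direction_mk' x₀ W
  have hVS : vectorSpan ℝ H = B.directionᗮ := by
    rw [hBdir, Submodule.orthogonal_orthogonal]
  refine ⟨?_, ⟨B, hBcar, hBdir, hVS, by rw [direction_affineSpan]; exact hVS⟩, ?_, ?_⟩
  · -- convexity
    have hVeq : voronoiCell K H =
        (⋂ p ∈ H, {x | dist x p = dist x p₀}) ∩
        (⋂ q ∈ K \ H, {x : EuclideanSpace ℝ (Fin d) | dist x p₀ < dist x q}) := by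
      ext x
      simp only [Set.mem_inter_iff, Set.mem_iInter, Set.mem_setOf_eq, Set.mem_diff]
      rw [hchar x]
      exact ⟨fun ⟨h1, h2⟩ => ⟨h1, fun q hq => h2 q hq.1 hq.2⟩,
        fun ⟨h1, h2⟩ => ⟨h1, fun q hq hqH => h2 q ⟨hq, hqH⟩⟩⟩
    rw [hVeq]
    refine Convex.inter ?_ ?_
    · exact convex_iInter fun p => convex_iInter fun hp => by
        have : {x : EuclideanSpace ℝ (Fin d) | dist x p = dist x p₀}
            = (AffineSubspace.perpBisector p p₀ : Set (EuclideanSpace ℝ (Fin d))) := by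
          ext x; simp [AffineSubspace.mem_perpBisector_iff_dist_eq]
        rw [this]
        exact (AffineSubspace.perpBisector p p₀).convex
    · exact convex_iInter fun q => convex_iInter fun _ => halfspace_convex_aux p₀ q
  · -- unique intersection point
    have : Nonempty (affineSpan ℝ H) := ⟨⟨p₀, mem_affineSpan ℝ hp₀⟩⟩
    set p : EuclideanSpace ℝ (Fin d) := ↑(EuclideanGeometry.orthogonalProjection (affineSpan ℝ H) x₀) with hpdef
    have hpA : p ∈ affineSpan ℝ H := EuclideanGeometry.orthogonalProjection_mem x₀
    have hpW : p -ᵥ x₀ ∈ W := by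
      have e : (affineSpan ℝ H).directionᗮ = (vectorSpan ℝ H)ᗮ := by
        rw [direction_affineSpan]
      have := EuclideanGeometry.orthogonalProjection_vsub_mem_direction_orthogonal
        (affineSpan ℝ H) x₀
      rw [hW, ← e]
      exact this
    have hpB : p ∈ bisectorSet H := by
      rw [← hBcar, AffineSubspace.mem_coe, hB]
      exact (AffineSubspace.mem_mk').mpr hpW
    refine ⟨p, ⟨hpA, hpB⟩, ?_⟩
    rintro q ⟨hqA, hqB⟩
    have h1 : q -ᵥ p ∈ vectorSpan ℝ H := by
      have := AffineSubspace.vsub_mem_direction hqA hpA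
      rwa [direction_affineSpan] at this
    have h2 : q -ᵥ p ∈ (vectorSpan ℝ H)ᗮ := by
      have hq' : q ∈ B := by rw [← hBcar] at hqB; exact hqB
      have hp' : p ∈ B := by rw [← hBcar] at hpB; exact hpB
      have := AffineSubspace.vsub_mem_direction hq' hp'
      rwa [hBdir] at this
    have : q -ᵥ p = 0 := by
      have h3 := (Submodule.mem_orthogonal _ _).mp h2 _ h1
      have h4 : ⟪(q -ᵥ p), (q -ᵥ p)⟫ = 0 := by rwa [real_inner_comm] at h3
      exact inner_self_eq_zero.mp h4
    rwa [vsub_eq_zero_iff_eq] at this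
  · -- openness
    have hopen : IsOpen (⋂ q ∈ K \ H, {x : EuclideanSpace ℝ (Fin d) | dist x p₀ < dist x q}) := by
      refine Set.Finite.isOpen_biInter (hKfin.subset Set.diff_subset) fun q _ => ?_
      exact isOpen_lt (continuous_id.dist continuous_const) (continuous_id.dist continuous_const)
    have hseq : {y : bisectorSet H | (y : EuclideanSpace ℝ (Fin d)) ∈ voronoiCell K H}
        = Subtype.val ⁻¹' (⋂ q ∈ K \ H, {x : EuclideanSpace ℝ (Fin d) | dist x p₀ < dist x q}) := by
      ext ⟨y, hy⟩
      simp only [Set.mem_setOf_eq, Set.mem_preimage, Set.mem_iInter, Set.mem_diff]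
      rw [hchar y]
      constructor
      · rintro ⟨_, h2⟩ q hq
        exact h2 q hq.1 hq.2
      · intro h
        exact ⟨fun r hr => hy r hr p₀ hp₀, fun q hq hqH => h q ⟨hq, hqH⟩⟩
    rw [hseq]
    exact hopen.preimage continuous_subtype_val
end
end

section
/- Let β := min { |η − η̄|² : η, η̄ ∈ 𝓔, η ≠ η̄ } > 0. Then for every pair of distinct η, η̄ ∈ 𝓔 and every x ∈ Q_η ∩ P_η̄ one has |η̄ − x|² ≥ |η − x|² + β. -/
noncomputable section
open RealInnerProductSpace

/-- `η` is the map assigning to each `x` the nearest point to `x` in `conv(opt_K(x))`. -/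
def IsEtaMap {d : ℕ} (K : Set (EuclideanSpace ℝ (Fin d)))
    (η : EuclideanSpace ℝ (Fin d) → EuclideanSpace ℝ (Fin d)) : Prop :=
  ∀ x, η x ∈ convexHull ℝ (optClass K x) ∧
    ∀ z ∈ convexHull ℝ (optClass K x), dist x (η x) ≤ dist x z

/-- Variational inequality for the nearest point in a convex set. -/
lemma var_ineq {d : ℕ} {C : Set (EuclideanSpace ℝ (Fin d))} (hC : Convex ℝ C)
    {x e e' : EuclideanSpace ℝ (Fin d)} (he : e ∈ C) (he' : e' ∈ C)
    (hmin : ∀ z ∈ C, dist x e ≤ dist x z) :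
    ⟪x - e, e' - e⟫ ≤ 0 := by
  haveI : Nonempty ↑C := ⟨⟨e, he⟩⟩
  have hinf : ‖x - e‖ = ⨅ w : C, ‖x - w‖ := by
    refine le_antisymm ?_ ?_
    · exact le_ciInf fun w => by
        simpa [dist_eq_norm] using hmin w w.2
    · exact ciInf_le ⟨0, fun r ⟨w, hw⟩ => hw ▸ norm_nonneg _⟩ (⟨e, he⟩ : C)
  exact (norm_eq_iInf_iff_real_inner_le_zero hC he).mp hinf e' he'

/-- Separation of potential levels: with `β` the least squared distance between distinct values
of `η_K`, one has `β > 0` and `|η̄ - x|² ≥ |η - x|² + β` for all distinct `η, η̄ ∈ 𝓔` and all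
`x ∈ Q_η ∩ P_η̄`. -/
theorem potential_level_separation {d : ℕ} (hd : 1 ≤ d)
    (K : Set (EuclideanSpace ℝ (Fin d))) (hKfin : K.Finite) (hKne : K.Nonempty)
    (η : EuclideanSpace ℝ (Fin d) → EuclideanSpace ℝ (Fin d)) (hη : IsEtaMap K η)
    (β : ℝ)
    (hβ : IsLeast {b : ℝ | ∃ e ∈ Set.range η, ∃ e' ∈ Set.range η, e ≠ e' ∧ b = ‖e - e'‖ ^ 2} β) :
    0 < β ∧
      ∀ e ∈ Set.range η, ∀ e' ∈ Set.range η, e ≠ e' →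
        ∀ x : EuclideanSpace ℝ (Fin d), η x = e → e' ∈ convexHull ℝ (optClass K x) →
          ‖e - x‖ ^ 2 + β ≤ ‖e' - x‖ ^ 2 := by
  constructor
  · obtain ⟨a, -, b, -, hab, hβeq⟩ := hβ.1
    rw [hβeq]
    exact pow_pos (norm_pos_iff.mpr (sub_ne_zero.mpr hab)) 2
  · rintro e he e' he' hne x hxe he'C
    have hβle : β ≤ ‖e - e'‖ ^ 2 := hβ.2 ⟨e, he, e', he', hne, rfl⟩
    have heC : e ∈ convexHull ℝ (optClass K x) := hxe ▸ (hη x).1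
    have hmin : ∀ z ∈ convexHull ℝ (optClass K x), dist x e ≤ dist x z := by
      intro z hz; exact hxe ▸ (hη x).2 z hz
    have hvi := var_ineq (convex_convexHull ℝ _) heC he'C hmin
    have hexp : ‖e' - x‖ ^ 2 = ‖e - x‖ ^ 2 + ‖e' - e‖ ^ 2 - 2 * ⟪x - e, e' - e⟫ := by
      have h1 : e' - x = (e - x) + (e' - e) := by abel
      rw [h1, norm_add_sq_real]
      have : ⟪e - x, e' - e⟫ = -⟪x - e, e' - e⟫ := by
        rw [← inner_neg_left]; congr 1; abel
      rw [this]; ring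
    rw [norm_sub_rev e e'] at hβle
    linarith [hvi, hβle, hexp]
end
end

section
/- For every η ∈ 𝓔, the set P_η = {x ∈ ℝ^d : η ∈ conv(opt_K(x))} is a polyhedron, i.e. a nonempty closed convex set that can be written as a finite intersection of closed half-spaces of ℝ^d. -/
open scoped RealInnerProductSpace

noncomputable section

private lemma dist_sq_sub {d : ℕ} (x y e : EuclideanSpace ℝ (Fin d)) :
    dist x y ^ 2 - dist x e ^ 2 = ‖y - e‖ ^ 2 - 2 * ⟪x - e, y - e⟫ := by
  have h := norm_sub_sq_real (x - e) (y - e)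
  rw [sub_sub_sub_cancel_right] at h
  rw [dist_eq_norm, dist_eq_norm, h]; ring

private lemma sum_weight_F {d : ℕ} {s : Finset (EuclideanSpace ℝ (Fin d))}
    {v : EuclideanSpace ℝ (Fin d) → ℝ} {e : EuclideanSpace ℝ (Fin d)}
    (h1 : ∑ y ∈ s, v y = 1) (hE : ∑ y ∈ s, v y • y = e) (x : EuclideanSpace ℝ (Fin d)) :
    ∑ y ∈ s, v y * (dist x y ^ 2 - dist x e ^ 2) = ∑ y ∈ s, v y * ‖y - e‖ ^ 2 := by
  have hzero : ∑ y ∈ s, v y • (y - e) = 0 := by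
    simp only [smul_sub, Finset.sum_sub_distrib, hE, ← Finset.sum_smul, h1, one_smul, sub_self]
  have hinner : ∑ y ∈ s, v y * ⟪x - e, y - e⟫ = 0 := by
    have h : ⟪x - e, ∑ y ∈ s, v y • (y - e)⟫ = ∑ y ∈ s, v y * ⟪x - e, y - e⟫ := by
      rw [inner_sum]
      exact Finset.sum_congr rfl fun y _ => real_inner_smul_right _ _ _
    rw [← h, hzero, inner_zero_right]
  calc ∑ y ∈ s, v y * (dist x y ^ 2 - dist x e ^ 2)
      = ∑ y ∈ s, (v y * ‖y - e‖ ^ 2 - 2 * (v y * ⟪x - e, y - e⟫)) := by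
        refine Finset.sum_congr rfl fun y _ => ?_
        rw [dist_sq_sub]; ring
    _ = ∑ y ∈ s, v y * ‖y - e‖ ^ 2 := by
        rw [Finset.sum_sub_distrib, ← Finset.mul_sum, hinner, mul_zero, sub_zero]

private lemma inner_two_smul {d : ℕ} (e z x : EuclideanSpace ℝ (Fin d)) :
    ⟪(2:ℝ) • (z - e), x⟫ = 2 * (⟪x - e, z - e⟫ + ⟪e, z - e⟫) := by
  rw [real_inner_smul_left, real_inner_comm, inner_sub_left]; ring

/-- For every `e` in the range `𝓔` of `η_K`, the set `P_e = {x : e ∈ conv(opt_K(x))}` is a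
polyhedron: a nonempty closed convex set which is a finite intersection of closed half-spaces. -/
theorem Peta_isPolyhedron {d : ℕ} (hd : 1 ≤ d)
    (K : Set (EuclideanSpace ℝ (Fin d))) (hKfin : K.Finite) (hKne : K.Nonempty)
    (η : EuclideanSpace ℝ (Fin d) → EuclideanSpace ℝ (Fin d)) (hη : IsEtaMap K η)
    (e : EuclideanSpace ℝ (Fin d)) (he : e ∈ Set.range η) :
    ({x | e ∈ convexHull ℝ (optClass K x)}).Nonempty ∧
      IsClosed {x | e ∈ convexHull ℝ (optClass K x)} ∧
      Convex ℝ {x | e ∈ convexHull ℝ (optClass K x)} ∧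
      ∃ (n : ℕ) (a : Fin n → EuclideanSpace ℝ (Fin d)) (b : Fin n → ℝ),
        (∀ i, a i ≠ 0) ∧
        {x | e ∈ convexHull ℝ (optClass K x)} = ⋂ i, {x | ⟪a i, x⟫ ≤ b i} := by
  classical
  obtain ⟨x₀, hx₀⟩ := he
  have hePe : e ∈ convexHull ℝ (optClass K x₀) := hx₀ ▸ (hη x₀).1
  have hopt_sub : ∀ x, optClass K x ⊆ K := fun x y hy => hy.1
  have hinf_le : ∀ (x : EuclideanSpace ℝ (Fin d)), ∀ z ∈ K, Metric.infDist x K ≤ dist x z :=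
    fun x z hz => Metric.infDist_le_dist_of_mem hz
  have hexists : ∀ x : EuclideanSpace ℝ (Fin d), ∃ z ∈ K, Metric.infDist x K = dist x z :=
    fun x => hKfin.isCompact.exists_infDist_eq_dist hKne x
  -- representation of `e` at `x₀`
  have hOfin : (optClass K x₀).Finite := hKfin.subset (hopt_sub x₀)
  have hePe' := hePe
  rw [hOfin.convexHull_eq] at hePe'
  obtain ⟨w, hw0, hw1, hwc⟩ := hePe'
  rw [Finset.centerMass_eq_of_sum_1 _ _ hw1] at hwc
  have hwE : ∑ y ∈ hOfin.toFinset, w y • y = e := by simpa using hwc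
  set t : Finset (EuclideanSpace ℝ (Fin d)) := hOfin.toFinset.filter (fun y => w y ≠ 0) with htdef
  have htsub : ∀ y ∈ t, y ∈ optClass K x₀ := fun y hy =>
    hOfin.mem_toFinset.mp (Finset.mem_of_mem_filter y hy)
  have htpos : ∀ y ∈ t, 0 < w y := by
    intro y hy
    have h1 := (Finset.mem_filter.mp hy).2
    exact lt_of_le_of_ne (hw0 y (htsub y hy)) (Ne.symm h1)
  have ht1 : ∑ y ∈ t, w y = 1 := by
    rw [htdef, Finset.sum_filter_of_ne (fun y _ h => h)]; exact hw1
  have htE : ∑ y ∈ t, w y • y = e := by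
    rw [htdef, Finset.sum_filter_of_ne (fun y _ h => ?_)]
    · exact hwE
    · intro h0; exact h (by rw [h0, zero_smul])
  set c : ℝ := Metric.infDist x₀ K ^ 2 - dist x₀ e ^ 2 with hcdef
  have hkeyc : ∑ y ∈ t, w y * ‖y - e‖ ^ 2 = c := by
    rw [← sum_weight_F ht1 htE x₀]
    have h : ∀ y ∈ t, w y * (dist x₀ y ^ 2 - dist x₀ e ^ 2) = w y * c := by
      intro y hy; rw [(htsub y hy).2]
    rw [Finset.sum_congr rfl h, ← Finset.sum_mul, ht1, one_mul]
  have hkey : ∀ x, ∑ y ∈ t, w y * (dist x y ^ 2 - dist x e ^ 2) = c := fun x => by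
    rw [sum_weight_F ht1 htE x, hkeyc]
  have hc0 : 0 ≤ c := by
    rw [← hkeyc]
    exact Finset.sum_nonneg fun y hy => mul_nonneg (htpos y hy).le (sq_nonneg _)
  -- the key polyhedral description with explicit inequality constraints
  have hPQ : {x | e ∈ convexHull ℝ (optClass K x)} =
      {x : EuclideanSpace ℝ (Fin d) |
        (∀ z ∈ K, c ≤ dist x z ^ 2 - dist x e ^ 2) ∧
        (∀ y ∈ t, dist x y ^ 2 - dist x e ^ 2 ≤ c)} := by
    ext x
    simp only [Set.mem_setOf_eq]
    constructor
    · intro hx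
      have hOx : (optClass K x).Finite := hKfin.subset (hopt_sub x)
      rw [hOx.convexHull_eq] at hx
      obtain ⟨v, hv0, hv1, hvc⟩ := hx
      rw [Finset.centerMass_eq_of_sum_1 _ _ hv1] at hvc
      have hvE : ∑ y ∈ hOx.toFinset, v y • y = e := by simpa using hvc
      have hv0' : ∀ y ∈ hOx.toFinset, 0 ≤ v y := fun y hy => hv0 y (hOx.mem_toFinset.mp hy)
      have hcx1 : ∑ y ∈ hOx.toFinset, v y * (dist x y ^ 2 - dist x e ^ 2)
          = Metric.infDist x K ^ 2 - dist x e ^ 2 := by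
        have h : ∀ y ∈ hOx.toFinset, v y * (dist x y ^ 2 - dist x e ^ 2)
            = v y * (Metric.infDist x K ^ 2 - dist x e ^ 2) := by
          intro y hy; rw [(hOx.mem_toFinset.mp hy).2]
        rw [Finset.sum_congr rfl h, ← Finset.sum_mul, hv1, one_mul]
      have hcge : c ≤ Metric.infDist x K ^ 2 - dist x e ^ 2 := by
        have h2 : ∑ y ∈ hOx.toFinset, v y * (dist x₀ y ^ 2 - dist x₀ e ^ 2)
            = Metric.infDist x K ^ 2 - dist x e ^ 2 := by
          rw [sum_weight_F hv1 hvE x₀, ← sum_weight_F hv1 hvE x, hcx1]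
        calc c = ∑ y ∈ hOx.toFinset, v y * c := by rw [← Finset.sum_mul, hv1, one_mul]
          _ ≤ ∑ y ∈ hOx.toFinset, v y * (dist x₀ y ^ 2 - dist x₀ e ^ 2) := by
              refine Finset.sum_le_sum fun y hy => mul_le_mul_of_nonneg_left ?_ (hv0' y hy)
              have h3 : Metric.infDist x₀ K ≤ dist x₀ y :=
                hinf_le x₀ y (hopt_sub x (hOx.mem_toFinset.mp hy))
              have h4 := pow_le_pow_left₀ Metric.infDist_nonneg h3 2
              rw [hcdef]; linarith
          _ = Metric.infDist x K ^ 2 - dist x e ^ 2 := h2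
      have hFge : ∀ z ∈ K, c ≤ dist x z ^ 2 - dist x e ^ 2 := by
        intro z hz
        have h1 := hinf_le x z hz
        have h2 := pow_le_pow_left₀ Metric.infDist_nonneg h1 2
        linarith
      refine ⟨hFge, ?_⟩
      intro y hy
      by_contra hlt
      push_neg at hlt
      have hsum := hkey x
      have hstrict : c < ∑ y' ∈ t, w y' * (dist x y' ^ 2 - dist x e ^ 2) := by
        calc c = ∑ y' ∈ t, w y' * c := by rw [← Finset.sum_mul, ht1, one_mul]
          _ < ∑ y' ∈ t, w y' * (dist x y' ^ 2 - dist x e ^ 2) := by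
              refine Finset.sum_lt_sum
                (fun i hi => mul_le_mul_of_nonneg_left (hFge i (htsub i hi).1) (htpos i hi).le)
                ⟨y, hy, mul_lt_mul_of_pos_left hlt (htpos y hy)⟩
      linarith
    · rintro ⟨h1, h2⟩
      have htopt : ∀ y ∈ t, y ∈ optClass K x := by
        intro y hy
        have hyK : y ∈ K := (htsub y hy).1
        obtain ⟨z₀, hz₀K, hz₀⟩ := hexists x
        have h3 : dist x y ^ 2 ≤ dist x z₀ ^ 2 := by
          have ha := h1 z₀ hz₀K
          have hb := h2 y hy
          linarith
        have h4 : dist x y ≤ dist x z₀ := by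
          nlinarith [dist_nonneg (x := x) (y := y), dist_nonneg (x := x) (y := z₀)]
        exact ⟨hyK, le_antisymm (by rw [hz₀]; exact h4) (hinf_le x y hyK)⟩
      have hmem : t.centerMass w id ∈ convexHull ℝ (optClass K x) :=
        Finset.centerMass_mem_convexHull t (fun i hi => (htpos i hi).le)
          (by rw [ht1]; exact one_pos) (fun i hi => htopt i hi)
      rw [Finset.centerMass_eq_of_sum_1 _ _ ht1] at hmem
      have : ∑ y ∈ t, w y • y ∈ convexHull ℝ (optClass K x) := by simpa using hmem
      rwa [htE] at this
  -- half-space equivalences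
  have hhalf1 : ∀ (z x : EuclideanSpace ℝ (Fin d)),
      (c ≤ dist x z ^ 2 - dist x e ^ 2) ↔
        ⟪(2:ℝ) • (z - e), x⟫ ≤ ‖z - e‖ ^ 2 - c + 2 * ⟪e, z - e⟫ := by
    intro z x
    rw [dist_sq_sub, inner_two_smul]
    constructor <;> intro h <;> linarith
  have hhalf2 : ∀ (y x : EuclideanSpace ℝ (Fin d)),
      (dist x y ^ 2 - dist x e ^ 2 ≤ c) ↔
        ⟪(2:ℝ) • (e - y), x⟫ ≤ c - ‖y - e‖ ^ 2 - 2 * ⟪e, y - e⟫ := by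
    intro y x
    have hneg : ⟪(2:ℝ) • (e - y), x⟫ = -(⟪(2:ℝ) • (y - e), x⟫) := by
      rw [show e - y = -(y - e) by rw [neg_sub], smul_neg, inner_neg_left]
    rw [dist_sq_sub, hneg, inner_two_smul]
    constructor <;> intro h <;> linarith
  -- the finite family of half-space constraints
  set s₁ : Finset (EuclideanSpace ℝ (Fin d)) := hKfin.toFinset.erase e with hs₁def
  set s₂ : Finset (EuclideanSpace ℝ (Fin d)) := t.erase e with hs₂def
  set C : Finset ((EuclideanSpace ℝ (Fin d)) × ℝ) :=
    s₁.image (fun z => ((2:ℝ) • (z - e), ‖z - e‖ ^ 2 - c + 2 * ⟪e, z - e⟫)) ∪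
    s₂.image (fun y => ((2:ℝ) • (e - y), c - ‖y - e‖ ^ 2 - 2 * ⟪e, y - e⟫)) with hCdef
  have hC_iff : ∀ x : EuclideanSpace ℝ (Fin d),
      (∀ p ∈ C, ⟪p.1, x⟫ ≤ p.2) ↔
      ((∀ z ∈ s₁, ⟪(2:ℝ) • (z - e), x⟫ ≤ ‖z - e‖ ^ 2 - c + 2 * ⟪e, z - e⟫) ∧
       (∀ y ∈ s₂, ⟪(2:ℝ) • (e - y), x⟫ ≤ c - ‖y - e‖ ^ 2 - 2 * ⟪e, y - e⟫)) := by
    intro x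
    constructor
    · intro h
      refine ⟨fun z hz => h _ (Finset.mem_union_left _ (Finset.mem_image_of_mem _ hz)),
        fun y hy => h _ (Finset.mem_union_right _ (Finset.mem_image_of_mem _ hy))⟩
    · rintro ⟨hA, hB⟩ p hp
      rcases Finset.mem_union.mp hp with hp | hp
      · obtain ⟨z, hz, rfl⟩ := Finset.mem_image.mp hp; exact hA z hz
      · obtain ⟨y, hy, rfl⟩ := Finset.mem_image.mp hp; exact hB y hy
  have hPC : {x | e ∈ convexHull ℝ (optClass K x)} = ⋂ p ∈ C, {x | ⟪p.1, x⟫ ≤ p.2} := by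
    rw [hPQ]
    ext x
    simp only [Set.mem_setOf_eq, Set.mem_iInter]
    rw [hC_iff x]
    constructor
    · rintro ⟨h1, h2⟩
      refine ⟨fun z hz => (hhalf1 z x).mp (h1 z (hKfin.mem_toFinset.mp (Finset.mem_of_mem_erase hz))),
        fun y hy => (hhalf2 y x).mp (h2 y (Finset.mem_of_mem_erase hy))⟩
    · rintro ⟨hA, hB⟩
      constructor
      · intro z hz
        by_cases hze : z = e
        · subst hze
          have h3 : Metric.infDist x₀ K ≤ dist x₀ z := hinf_le x₀ z hz
          have h4 := pow_le_pow_left₀ Metric.infDist_nonneg h3 2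
          have h5 : c ≤ 0 := by rw [hcdef]; linarith
          linarith [sub_self (dist x z ^ 2)]
        · exact (hhalf1 z x).mpr (hA z (Finset.mem_erase.mpr ⟨hze, hKfin.mem_toFinset.mpr hz⟩))
      · intro y hy
        by_cases hye : y = e
        · subst hye; linarith [sub_self (dist x y ^ 2)]
        · exact (hhalf2 y x).mpr (hB y (Finset.mem_erase.mpr ⟨hye, hy⟩))
  have hCnz : ∀ p ∈ C, p.1 ≠ (0 : EuclideanSpace ℝ (Fin d)) := by
    intro p hp
    rcases Finset.mem_union.mp hp with hp | hp
    · obtain ⟨z, hz, rfl⟩ := Finset.mem_image.mp hp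
      exact smul_ne_zero two_ne_zero (sub_ne_zero.mpr (Finset.mem_erase.mp hz).1)
    · obtain ⟨y, hy, rfl⟩ := Finset.mem_image.mp hp
      exact smul_ne_zero two_ne_zero
        (sub_ne_zero.mpr (Ne.symm (Finset.mem_erase.mp hy).1))
  -- reindex by `Fin C.card`
  set eqv : Fin C.card ≃ {p // p ∈ C} := C.equivFin.symm with heqv
  have hfinal : {x | e ∈ convexHull ℝ (optClass K x)} =
      ⋂ i : Fin C.card, {x | ⟪(eqv i).1.1, x⟫ ≤ (eqv i).1.2} := by
    rw [hPC]
    ext x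
    simp only [Set.mem_iInter, Set.mem_setOf_eq]
    constructor
    · intro h i
      exact h _ (eqv i).2
    · intro h p hp
      have := h (eqv.symm ⟨p, hp⟩)
      rwa [Equiv.apply_symm_apply] at this
  have hlin : ∀ a : EuclideanSpace ℝ (Fin d), IsLinearMap ℝ (fun x => ⟪a, x⟫) :=
    fun a => ⟨fun x y => inner_add_right a x y, fun r x => real_inner_smul_right a x r⟩
  refine ⟨⟨x₀, hePe⟩, ?_, ?_, C.card,
    fun i => (eqv i).1.1,
    fun i => (eqv i).1.2, ?_, hfinal⟩
  · rw [hfinal]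
    exact isClosed_iInter fun i =>
      isClosed_le (Continuous.inner continuous_const continuous_id) continuous_const
  · rw [hfinal]
    exact convex_iInter fun i => convex_halfSpace_le (hlin _) _
  · intro i
    exact hCnz _ (eqv i).2
end
end

section
/- Let A, B ⊂ ℝ^d be two polytopes with A ∩ B ≠ ∅. Then there exists a constant M > 0 such that dist_{A ∩ B}(x) ≤ M · dist_B(x) for every x ∈ A. -/
noncomputable section

open Metric Finset


-- infDist under subtype coercion
lemma infDist_subtype_val {α : Type*} [MetricSpace α] {p : α → Prop}
    (s : Set (Subtype p)) (x : Subtype p) :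
    Metric.infDist (x : α) (Subtype.val '' s) = Metric.infDist x s := by
  have h : Isometry ((↑) : Subtype p → α) := fun a b => rfl
  exact Metric.infDist_image h

set_option maxHeartbeats 8000000 in
/-- Hoffman error bound for homogeneous systems (cones). -/
lemma coneHoffman : ∀ (n : ℕ) (E : Type) [NormedAddCommGroup E] [InnerProductSpace ℝ E]
    [FiniteDimensional ℝ E] (ℓ : Fin n → E →L[ℝ] ℝ),
    ∃ M : ℝ, 0 < M ∧ ∀ y : E,
      Metric.infDist y {z | ∀ i, ℓ i z ≤ 0} ≤ M * ∑ i, max (ℓ i y) 0 := by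
  intro n
  induction n with
  | zero =>
    intro E _ _ _ ℓ
    refine ⟨1, one_pos, fun y => ?_⟩
    have h1 : {z : E | ∀ i : Fin 0, ℓ i z ≤ 0} = Set.univ := by
      ext z; simp
    have h2 : Metric.infDist y {z : E | ∀ i : Fin 0, ℓ i z ≤ 0} = 0 := by
      rw [h1]
      refine le_antisymm ?_ Metric.infDist_nonneg
      have := Metric.infDist_le_dist_of_mem (x := y) (Set.mem_univ y)
      simpa using this
    rw [h2]
    have h3 : (0:ℝ) ≤ ∑ i : Fin 0, max (ℓ i y) 0 :=
      Finset.sum_nonneg fun i _ => le_max_right _ _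
    linarith
  | succ n IH =>
    intro E _ _ _ ℓ
    haveI : ProperSpace E := FiniteDimensional.proper ℝ E
    set L : E →L[ℝ] ℝ := ℓ (Fin.last n) with hLdef
    set ℓ' : Fin n → E →L[ℝ] ℝ := fun i => ℓ i.castSucc with hl'def
    obtain ⟨M', hM', hIH⟩ := IH E ℓ'
    set C' : Set E := {z | ∀ i, ℓ' i z ≤ 0} with hC'def
    set C : Set E := {z | ∀ i : Fin (n+1), ℓ i z ≤ 0} with hCdef
    have hCsub : C ⊆ C' := fun z hz i => hz i.castSucc
    have hC'0 : (0:E) ∈ C' := by intro i; simp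
    have hC0 : (0:E) ∈ C := by intro i; simp
    have hC'closed : IsClosed C' := by
      have : C' = ⋂ i, (fun z => ℓ' i z) ⁻¹' Set.Iic 0 := by
        ext z; simp [hC'def, Set.mem_iInter]
      rw [this]
      exact isClosed_iInter fun i => IsClosed.preimage (ℓ' i).continuous isClosed_Iic
    -- φ notation
    have hφnonneg : ∀ y : E, 0 ≤ ∑ i : Fin (n+1), max (ℓ i y) 0 :=
      fun y => Finset.sum_nonneg fun i _ => le_max_right _ _
    have hφ'le : ∀ y : E, (∑ i : Fin n, max (ℓ' i y) 0) ≤ ∑ i : Fin (n+1), max (ℓ i y) 0 := by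
      intro y
      rw [Fin.sum_univ_castSucc]
      have := le_max_right (ℓ (Fin.last n) y) 0
      simp only [hl'def]
      linarith
    have hterm : ∀ y : E, L y ≤ ∑ i : Fin (n+1), max (ℓ i y) 0 := by
      intro y
      calc L y ≤ max (L y) 0 := le_max_left _ _
        _ ≤ _ := Finset.single_le_sum (f := fun i => max (ℓ i y) 0)
            (fun i _ => le_max_right _ _) (Finset.mem_univ (Fin.last n))
    by_cases hex : ∃ c ∈ C, L c < 0
    · -- case (a)
      obtain ⟨c₀, hc₀C, hc₀⟩ := hex
      set μ : ℝ := -L c₀ with hμdef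
      have hμ : 0 < μ := by simp [hμdef]; linarith
      refine ⟨M' + (1 + ‖L‖ * M') * (‖c₀‖ + 1) / μ, by positivity, fun y => ?_⟩
      set φ : ℝ := ∑ i : Fin (n+1), max (ℓ i y) 0 with hφdef
      have hφ0 : 0 ≤ φ := hφnonneg y
      obtain ⟨p, hpC', hpd⟩ := hC'closed.exists_infDist_eq_dist ⟨0, hC'0⟩ y
      have hyp : dist y p ≤ M' * φ := by
        rw [← hpd]
        calc Metric.infDist y C' ≤ M' * ∑ i : Fin n, max (ℓ' i y) 0 := hIH y
          _ ≤ M' * φ := by nlinarith [hφ'le y]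
      by_cases hLp : L p ≤ 0
      · have hpC : p ∈ C := by
          intro i
          refine Fin.lastCases ?_ ?_ i
          · exact hLp
          · exact fun j => hpC' j
        calc Metric.infDist y C ≤ dist y p := Metric.infDist_le_dist_of_mem hpC
          _ ≤ M' * φ := hyp
          _ ≤ _ := by
              have hX : 0 ≤ (1 + ‖L‖ * M') * (‖c₀‖ + 1) / μ * φ :=
                mul_nonneg (by positivity) hφ0
              nlinarith [hX]
      · push_neg at hLp
        set lam : ℝ := max ‖p‖ 1 with hlamdef
        have hlam1 : (1:ℝ) ≤ lam := le_max_right _ _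
        have hlam0 : 0 < lam := lt_of_lt_of_le one_pos hlam1
        have hplam : ‖p‖ ≤ lam := le_max_left _ _
        set t : ℝ := L p / (L p + lam * μ) with htdef
        have hden : 0 < L p + lam * μ := by nlinarith
        have ht0 : 0 < t := div_pos hLp hden
        have ht1 : t < 1 := by
          rw [htdef, div_lt_one hden]; nlinarith
        set q : E := p + t • (lam • c₀ - p) with hqdef
        have hqC : q ∈ C := by
          intro i
          have hgen : ∀ g : E →L[ℝ] ℝ, g q = (1 - t) * g p + t * (lam * g c₀) := by
            intro g
            simp [hqdef, map_add, map_smul, map_sub, smul_eq_mul]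
            ring
          refine Fin.lastCases ?_ ?_ i
          · -- last: L q = 0
            show L q ≤ 0
            have hq0 : L q = (1 - t) * L p + t * (lam * L c₀) := hgen L
            have hc : lam * L c₀ = -(lam * μ) := by rw [hμdef]; ring
            have htt : t * (L p + lam * μ) = L p := by
              rw [htdef]; field_simp
            rw [hq0, hc]
            nlinarith [htt]
          · intro j
            show ℓ' j q ≤ 0
            have hthis : ℓ' j q = (1 - t) * ℓ' j p + t * (lam * ℓ' j c₀) := hgen (ℓ' j)
            have h1 : ℓ' j p ≤ 0 := hpC' j
            have h2 : ℓ' j c₀ ≤ 0 := hCsub hc₀C j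
            have e1 : (1 - t) * ℓ' j p ≤ (1 - t) * 0 :=
              mul_le_mul_of_nonneg_left h1 (by linarith : (0:ℝ) ≤ 1 - t)
            have e2 : t * (lam * ℓ' j c₀) ≤ t * (lam * 0) :=
              mul_le_mul_of_nonneg_left
                (mul_le_mul_of_nonneg_left h2 hlam0.le) ht0.le
            rw [hthis]
            nlinarith [e1, e2]
        have hLpbound : L p ≤ (1 + ‖L‖ * M') * φ := by
          have h1 : L p - L y ≤ ‖L‖ * dist y p := by
            have := (L).le_opNorm (p - y)
            have h2 : L p - L y = L (p - y) := by rw [map_sub]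
            rw [h2]
            calc L (p - y) ≤ |L (p - y)| := le_abs_self _
              _ ≤ ‖L‖ * ‖p - y‖ := by simpa using (L).le_opNorm (p - y)
              _ = ‖L‖ * dist y p := by rw [dist_comm, dist_eq_norm]
          have h3 : L y ≤ φ := hterm y
          nlinarith [norm_nonneg L, hM'.le, hφ0, hyp, mul_le_mul_of_nonneg_left hyp (norm_nonneg L)]
        have hpq : ‖p - q‖ ≤ (L p / μ) * (‖c₀‖ + 1) := by
          have h1 : p - q = (-t) • (lam • c₀ - p) := by rw [hqdef, neg_smul]; abel
          have h2 : ‖p - q‖ = t * ‖lam • c₀ - p‖ := by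
            rw [h1, norm_smul]; simp [abs_of_pos ht0]
          have h3 : ‖lam • c₀ - p‖ ≤ lam * ‖c₀‖ + lam := by
            calc ‖lam • c₀ - p‖ ≤ ‖lam • c₀‖ + ‖p‖ := norm_sub_le _ _
              _ ≤ lam * ‖c₀‖ + lam := by
                  rw [norm_smul]; simp [abs_of_pos hlam0]; linarith
          have h4 : t * lam ≤ L p / μ := by
            rw [htdef, div_mul_eq_mul_div, div_le_div_iff₀ hden hμ]
            nlinarith
          calc ‖p - q‖ = t * ‖lam • c₀ - p‖ := h2
            _ ≤ t * (lam * ‖c₀‖ + lam) := by nlinarith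
            _ = t * lam * (‖c₀‖ + 1) := by ring
            _ ≤ (L p / μ) * (‖c₀‖ + 1) := by nlinarith [norm_nonneg c₀]
        calc Metric.infDist y C ≤ dist y q := Metric.infDist_le_dist_of_mem hqC
          _ ≤ dist y p + ‖p - q‖ := by
              rw [dist_eq_norm, dist_eq_norm]
              calc ‖y - q‖ ≤ ‖y - p‖ + ‖p - q‖ := by
                    simpa using norm_sub_le_norm_sub_add_norm_sub y p q
                _ = ‖y - p‖ + ‖p - q‖ := rfl
          _ ≤ M' * φ + (L p / μ) * (‖c₀‖ + 1) := by linarith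
          _ ≤ M' * φ + ((1 + ‖L‖ * M') * φ / μ) * (‖c₀‖ + 1) := by
              gcongr
          _ = (M' + (1 + ‖L‖ * M') * (‖c₀‖ + 1) / μ) * φ := by ring
    · -- case (b)
      push_neg at hex
      have hLC' : ∀ c ∈ C', 0 ≤ L c := by
        intro c hc
        by_contra h
        push_neg at h
        have hcC : c ∈ C := by
          intro i
          refine Fin.lastCases ?_ ?_ i
          · exact h.le
          · exact fun j => hc j
        exact absurd h (not_lt.mpr (hex c hcC))
      by_cases hL0 : L = 0
      · refine ⟨M', hM', fun y => ?_⟩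
        have hCeq : C = C' := by
          ext z
          constructor
          · exact fun hz => hCsub hz
          · intro hz i
            refine Fin.lastCases ?_ ?_ i
            · rw [← hLdef, hL0]; simp
            · exact fun j => hz j
        rw [hCeq]
        calc Metric.infDist y C' ≤ M' * ∑ i : Fin n, max (ℓ' i y) 0 := hIH y
          _ ≤ M' * _ := by nlinarith [hφ'le y, hM'.le]
      · -- L ≠ 0 : use Riesz representation and project to ker L
        obtain ⟨a, ha⟩ : ∃ a : E, ∀ x, L x = inner ℝ a x := by
          refine ⟨(InnerProductSpace.toDual ℝ E).symm L, fun x => ?_⟩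
          simp [InnerProductSpace.toDual_symm_apply]
        have ha0 : a ≠ 0 := by
          intro h
          apply hL0
          ext x
          simp [ha x, h]
        have hna : 0 < ‖a‖ := norm_pos_iff.mpr ha0
        set K : Submodule ℝ E := LinearMap.ker (L : E →ₗ[ℝ] ℝ) with hKdef
        set g : Fin n → (↥K) →L[ℝ] ℝ := fun i => (ℓ' i).comp K.subtypeL with hgdef
        obtain ⟨M'', hM'', hIH2⟩ := IH (↥K) g
        set S : Set ↥K := {v : ↥K | ∀ i, g i v ≤ 0} with hSdef
        have hCS : C = Subtype.val '' S := by
          ext z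
          constructor
          · intro hz
            have hz0 : L z = 0 := le_antisymm (hz (Fin.last n)) (hLC' z (hCsub hz))
            refine ⟨⟨z, hz0⟩, fun i => ?_, rfl⟩
            exact hz i.castSucc
          · rintro ⟨⟨v, hv⟩, hvS, rfl⟩
            intro i
            refine Fin.lastCases ?_ ?_ i
            · exact le_of_eq hv
            · intro j
              exact hvS j
        set c₁ : ℝ := 1 + ‖L‖ * M' with hc₁def
        have hc₁ : 0 < c₁ := by positivity
        refine ⟨c₁ / ‖a‖ + M'' * ∑ i : Fin n, (1 + ‖ℓ' i‖ * c₁ / ‖a‖), ?_, fun y => ?_⟩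
        · have : 0 ≤ ∑ i : Fin n, (1 + ‖ℓ' i‖ * c₁ / ‖a‖) :=
            Finset.sum_nonneg fun i _ => by positivity
          positivity
        set φ : ℝ := ∑ i : Fin (n+1), max (ℓ i y) 0 with hφdef
        have hφ0 : 0 ≤ φ := hφnonneg y
        have hsingle : ∀ i : Fin (n+1), max (ℓ i y) 0 ≤ φ := fun i =>
          Finset.single_le_sum (f := fun i => max (ℓ i y) 0)
            (fun j _ => le_max_right _ _) (Finset.mem_univ i)
        obtain ⟨p, hpC', hpd⟩ := hC'closed.exists_infDist_eq_dist ⟨0, hC'0⟩ y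
        have hyp : dist y p ≤ M' * φ := by
          rw [← hpd]
          calc Metric.infDist y C' ≤ M' * ∑ i : Fin n, max (ℓ' i y) 0 := hIH y
            _ ≤ M' * φ := by nlinarith [hφ'le y]
        have hLy : |L y| ≤ c₁ * φ := by
          rw [abs_le]
          constructor
          · have h1 : 0 ≤ L p := hLC' p hpC'
            have h2 : L p - L y ≤ ‖L‖ * dist y p := by
              calc L p - L y = L (p - y) := by rw [map_sub]
                _ ≤ |L (p - y)| := le_abs_self _
                _ ≤ ‖L‖ * ‖p - y‖ := by simpa using (L).le_opNorm (p - y)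
                _ = ‖L‖ * dist y p := by rw [dist_comm, dist_eq_norm]
            nlinarith [norm_nonneg L, mul_le_mul_of_nonneg_left hyp (norm_nonneg L)]
          · have h7 : L y ≤ φ := hterm y
            have h8 : 0 ≤ ‖L‖ * M' * φ :=
              mul_nonneg (mul_nonneg (norm_nonneg L) hM'.le) hφ0
            calc L y ≤ φ := h7
              _ ≤ c₁ * φ := by rw [hc₁def]; nlinarith [h8]
        set z : E := y - (L y / ‖a‖ ^ 2) • a with hzdef
        have hLa : L a = ‖a‖ ^ 2 := by rw [ha a, real_inner_self_eq_norm_sq]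
        have hLz : L z = 0 := by
          rw [hzdef, map_sub, map_smul, smul_eq_mul, hLa]
          field_simp; ring
        have hyz : ‖y - z‖ ≤ c₁ * φ / ‖a‖ := by
          have h1 : y - z = (L y / ‖a‖ ^ 2) • a := by rw [hzdef]; abel
          have h2 : ‖y - z‖ = |L y| / ‖a‖ := by
            rw [h1, norm_smul, Real.norm_eq_abs, abs_div,
              abs_of_nonneg (by positivity : (0:ℝ) ≤ ‖a‖ ^ 2)]
            rw [div_mul_eq_mul_div, sq, mul_div_assoc]
            rw [show ‖a‖ / (‖a‖ * ‖a‖) = 1 / ‖a‖ by field_simp, mul_one_div]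
          rw [h2]
          exact (div_le_div_iff_of_pos_right hna).mpr hLy
        have hzmem : z ∈ K := by
          rw [hKdef, LinearMap.mem_ker]
          exact hLz
        set v : ↥K := ⟨z, hzmem⟩ with hvdef
        have hdistz : Metric.infDist z C = Metric.infDist v S := by
          rw [hCS]
          exact infDist_subtype_val S v
        have hbound : Metric.infDist v S ≤ M'' * ∑ i : Fin n, ((1 + ‖ℓ' i‖ * c₁ / ‖a‖) * φ) := by
          calc Metric.infDist v S ≤ M'' * ∑ i : Fin n, max (g i v) 0 := hIH2 v
            _ ≤ _ := by
                apply mul_le_mul_of_nonneg_left _ hM''.le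
                apply Finset.sum_le_sum
                intro i _
                have hgv : g i v = ℓ' i z := rfl
                have h1 : ℓ' i z ≤ ℓ' i y + ‖ℓ' i‖ * ‖y - z‖ := by
                  have h2 : ℓ' i z - ℓ' i y ≤ ‖ℓ' i‖ * ‖y - z‖ := by
                    calc ℓ' i z - ℓ' i y = ℓ' i (z - y) := (map_sub (ℓ' i) z y).symm
                      _ ≤ |ℓ' i (z - y)| := le_abs_self _
                      _ ≤ ‖ℓ' i‖ * ‖z - y‖ := by simpa using (ℓ' i).le_opNorm (z - y)
                      _ = ‖ℓ' i‖ * ‖y - z‖ := by rw [norm_sub_rev]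
                  linarith
                have h3 : ℓ' i y ≤ max (ℓ' i y) 0 := le_max_left _ _
                have h4 : max (ℓ' i y) 0 ≤ φ := hsingle i.castSucc
                have h5 : ‖ℓ' i‖ * ‖y - z‖ ≤ ‖ℓ' i‖ * (c₁ * φ / ‖a‖) :=
                  mul_le_mul_of_nonneg_left hyz (norm_nonneg _)
                rw [hgv]
                have h6 : (0:ℝ) ≤ (1 + ‖ℓ' i‖ * c₁ / ‖a‖) * φ := by positivity
                rw [max_le_iff]
                constructor
                · calc ℓ' i z ≤ ℓ' i y + ‖ℓ' i‖ * ‖y - z‖ := h1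
                    _ ≤ φ + ‖ℓ' i‖ * (c₁ * φ / ‖a‖) := by linarith
                    _ = (1 + ‖ℓ' i‖ * c₁ / ‖a‖) * φ := by field_simp
                · exact h6
        calc Metric.infDist y C ≤ Metric.infDist z C + dist y z :=
              Metric.infDist_le_infDist_add_dist
          _ ≤ Metric.infDist v S + c₁ * φ / ‖a‖ := by
              rw [hdistz, dist_eq_norm]; linarith [hyz]
          _ ≤ M'' * ∑ i : Fin n, ((1 + ‖ℓ' i‖ * c₁ / ‖a‖) * φ) + c₁ * φ / ‖a‖ := by
              linarith [hbound]
          _ = (c₁ / ‖a‖ + M'' * ∑ i : Fin n, (1 + ‖ℓ' i‖ * c₁ / ‖a‖)) * φ := by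
              rw [← Finset.sum_mul]
              ring


set_option maxHeartbeats 1000000 in
lemma coneHoffman' (ι : Type) [Fintype ι] (E : Type) [NormedAddCommGroup E]
    [InnerProductSpace ℝ E] [FiniteDimensional ℝ E] (ℓ : ι → E →L[ℝ] ℝ) :
    ∃ M : ℝ, 0 < M ∧ ∀ y : E,
      Metric.infDist y {z | ∀ i, ℓ i z ≤ 0} ≤ M * ∑ i, max (ℓ i y) 0 := by
  obtain ⟨M, hM, h⟩ := coneHoffman (Fintype.card ι) E (fun i => ℓ ((Fintype.equivFin ι).symm i))
  set e := Fintype.equivFin ι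
  refine ⟨M, hM, fun y => ?_⟩
  have hset : {z : E | ∀ i, ℓ (e.symm i) z ≤ 0} = {z | ∀ i, ℓ i z ≤ 0} := by
    ext z
    constructor
    · intro hz i
      have := hz (e i)
      simpa using this
    · intro hz i
      exact hz _
  have hsum : (∑ i, max (ℓ (e.symm i) y) 0) = ∑ i, max (ℓ i y) 0 :=
    Fintype.sum_equiv e.symm _ _ (fun i => rfl)
  have h2 := h y
  rw [hset, hsum] at h2
  exact h2

set_option maxHeartbeats 2000000 in
/-- Local Hoffman bound near a feasible point. -/
lemma localHoffman (ι : Type) [Fintype ι] (E : Type) [NormedAddCommGroup E]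
    [InnerProductSpace ℝ E] [FiniteDimensional ℝ E] (T : ι → E →ᵃ[ℝ] ℝ) (p : E)
    (hp : ∀ i, T i p ≤ 0) :
    ∃ ε M : ℝ, 0 < ε ∧ 0 < M ∧ ∀ x ∈ Metric.ball p ε,
      Metric.infDist x {z | ∀ i, T i z ≤ 0} ≤ M * ∑ i, max (T i x) 0 := by
  classical
  haveI : ProperSpace E := FiniteDimensional.proper ℝ E
  set lin : ι → E →L[ℝ] ℝ := fun i => LinearMap.toContinuousLinearMap (T i).linear with hlin
  have haff : ∀ (i : ι) (x : E), T i x = T i p + lin i (x - p) := by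
    intro i x
    have h := (T i).linearMap_vsub x p
    simp only [vsub_eq_sub] at h
    have h2 : lin i (x - p) = (T i).linear (x - p) := rfl
    rw [h2, h]
    ring
  obtain ⟨M₀, hM₀, hcone⟩ := coneHoffman' {i : ι // T i p = 0} E (fun i => lin i.1)
  set C : Set E := {z | ∀ i : {i : ι // T i p = 0}, lin i.1 z ≤ 0} with hCdef
  have hC0 : (0:E) ∈ C := fun i => by simp
  have hCclosed : IsClosed C := by
    have h : C = ⋂ i : {i : ι // T i p = 0}, (fun z => lin i.1 z) ⁻¹' Set.Iic 0 := by
      ext z; simp [hCdef, Set.mem_iInter]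
    rw [h]
    exact isClosed_iInter fun i => isClosed_Iic.preimage (lin i.1).continuous
  -- δ : uniform slack of inactive constraints
  set F : Finset ℝ :=
    insert 1 ((Finset.univ.filter (fun i : ι => T i p < 0)).image (fun i => -(T i p))) with hF
  have hFne : F.Nonempty := ⟨1, Finset.mem_insert_self _ _⟩
  set δ : ℝ := F.min' hFne with hδdef
  have hδpos : 0 < δ := by
    rw [hδdef, Finset.lt_min'_iff]
    intro b hb
    rw [hF, Finset.mem_insert] at hb
    rcases hb with hb | hb
    · rw [hb]; norm_num
    · obtain ⟨i, hi, rfl⟩ := Finset.mem_image.mp hb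
      have := (Finset.mem_filter.mp hi).2
      linarith
  have hδle : ∀ i : ι, T i p < 0 → δ ≤ -(T i p) := by
    intro i hi
    apply Finset.min'_le
    rw [hF]
    exact Finset.mem_insert_of_mem
      (Finset.mem_image_of_mem _ (Finset.mem_filter.mpr ⟨Finset.mem_univ _, hi⟩))
  set Lip : ℝ := ∑ i, ‖lin i‖ with hLip
  have hLip0 : 0 ≤ Lip := Finset.sum_nonneg fun i _ => norm_nonneg _
  have hLiple : ∀ i, ‖lin i‖ ≤ Lip :=
    fun i => Finset.single_le_sum (f := fun i => ‖lin i‖)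
      (fun j _ => norm_nonneg _) (Finset.mem_univ i)
  refine ⟨δ / (2 * (Lip + 1)), M₀, by positivity, hM₀, fun x hx => ?_⟩
  set ε : ℝ := δ / (2 * (Lip + 1)) with hεdef
  have hεδ : 2 * ε * (Lip + 1) = δ := by rw [hεdef]; field_simp
  rw [Metric.mem_ball, dist_eq_norm] at hx
  set φ : ℝ := ∑ i, max (T i x) 0 with hφdef
  have hφ0 : 0 ≤ φ := Finset.sum_nonneg fun i _ => le_max_right _ _
  -- cone bound
  have hconesum : (∑ i : {i : ι // T i p = 0}, max (lin i.1 (x - p)) 0) ≤ φ := by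
    have heq : ∀ i : {i : ι // T i p = 0}, max (lin i.1 (x - p)) 0 = max (T i.1 x) 0 := by
      intro i
      have h5 := haff i.1 x
      rw [i.2] at h5
      rw [h5, zero_add]
    rw [Finset.sum_congr rfl (fun i _ => heq i)]
    rw [hφdef]
    have h1 : (∑ i : {i : ι // T i p = 0}, max (T i.1 x) 0)
        = ∑ i ∈ Finset.univ.filter (fun i => T i p = 0), max (T i x) 0 :=
      (Finset.sum_subtype (p := fun i => T i p = 0)
        (Finset.univ.filter (fun i => T i p = 0))
        (fun i => by simp) (fun i => max (T i x) 0)).symm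
    rw [h1]
    exact Finset.sum_le_sum_of_subset_of_nonneg (Finset.filter_subset _ _)
      (fun i _ _ => le_max_right _ _)
  obtain ⟨q', hq'C, hq'd⟩ := hCclosed.exists_infDist_eq_dist ⟨0, hC0⟩ (x - p)
  have hd1 : dist (x - p) q' ≤ M₀ * φ := by
    rw [← hq'd]
    calc Metric.infDist (x - p) C ≤ M₀ * ∑ i : {i : ι // T i p = 0}, max (lin i.1 (x - p)) 0 :=
          hcone (x - p)
      _ ≤ M₀ * φ := by nlinarith
  have hd2 : dist (x - p) q' ≤ ‖x - p‖ := by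
    rw [← hq'd]
    have := Metric.infDist_le_dist_of_mem (x := x - p) hC0
    simpa using this
  have hq'norm : ‖q'‖ ≤ 2 * ‖x - p‖ := by
    have h9 : q' = (q' - (x - p)) + (x - p) := by abel
    calc ‖q'‖ = ‖(q' - (x - p)) + (x - p)‖ := by rw [← h9]
      _ ≤ ‖q' - (x - p)‖ + ‖x - p‖ := norm_add_le _ _
      _ ≤ ‖x - p‖ + ‖x - p‖ := by
          have h8 : ‖q' - (x - p)‖ = dist (x - p) q' := by
            rw [dist_eq_norm, norm_sub_rev]
          linarith [hd2, h8.le, h8.ge]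
      _ = 2 * ‖x - p‖ := by ring
  set q : E := p + q' with hqdef
  have hqmem : q ∈ {z : E | ∀ i, T i z ≤ 0} := by
    intro i
    have hTq : T i q = T i p + lin i q' := by
      rw [haff i q, hqdef]
      simp
    rcases lt_or_eq_of_le (hp i) with hi | hi
    · -- inactive
      have h1 : lin i q' ≤ ‖lin i‖ * ‖q'‖ := by
        calc lin i q' ≤ |lin i q'| := le_abs_self _
          _ ≤ ‖lin i‖ * ‖q'‖ := by simpa using (lin i).le_opNorm q'
      have h2 : ‖lin i‖ * ‖q'‖ ≤ Lip * (2 * ε) := by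
        apply mul_le_mul (hLiple i) _ (norm_nonneg _) hLip0
        calc ‖q'‖ ≤ 2 * ‖x - p‖ := hq'norm
          _ ≤ 2 * ε := by linarith
      have h3 : Lip * (2 * ε) < δ := by nlinarith
      have h4 : δ ≤ -(T i p) := hδle i hi
      rw [hTq]
      linarith
    · -- active
      rw [hTq, hi, zero_add]
      have := hq'C ⟨i, hi⟩
      simpa using this
  calc Metric.infDist x {z : E | ∀ i, T i z ≤ 0} ≤ dist x q :=
        Metric.infDist_le_dist_of_mem hqmem
    _ = dist (x - p) q' := by rw [dist_eq_norm, dist_eq_norm, hqdef]; congr 1; abel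
    _ ≤ M₀ * φ := hd1

/-- A polytope in `ℝ^d`: a nonempty bounded set which is a finite intersection of closed
half-spaces `{x : T(x) ≤ 0}` with `T` affine. -/
def IsPolytope {d : ℕ} (P : Set (EuclideanSpace ℝ (Fin d))) : Prop :=
  P.Nonempty ∧ Bornology.IsBounded P ∧
    ∃ (n : ℕ) (T : Fin n → (EuclideanSpace ℝ (Fin d) →ᵃ[ℝ] ℝ)),
      P = ⋂ i, {x | T i x ≤ 0}

set_option maxHeartbeats 2000000 in
/-- Reciprocal distance of intersecting polytopes: if `A ∩ B ≠ ∅` then there is `M > 0` with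
`dist_{A ∩ B}(x) ≤ M dist_B(x)` for all `x ∈ A`. -/
theorem dist_inter_polytopes {d : ℕ} (A B : Set (EuclideanSpace ℝ (Fin d)))
    (hA : IsPolytope A) (hB : IsPolytope B) (hAB : (A ∩ B).Nonempty) :
    ∃ M : ℝ, 0 < M ∧ ∀ x ∈ A, Metric.infDist x (A ∩ B) ≤ M * Metric.infDist x B := by
  classical
  obtain ⟨hAne, hAbd, m, SA, hSA⟩ := hA
  obtain ⟨hBne, hBbd, n, TB, hTB⟩ := hB
  have hclosed : ∀ (k : ℕ) (T : Fin k → EuclideanSpace ℝ (Fin d) →ᵃ[ℝ] ℝ),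
      IsClosed (⋂ i, {x : EuclideanSpace ℝ (Fin d) | T i x ≤ 0}) := by
    intro k T
    exact isClosed_iInter fun i =>
      isClosed_le (T i).continuous_of_finiteDimensional continuous_const
  have hclosedA : IsClosed A := hSA ▸ hclosed m SA
  have hclosedB : IsClosed B := hTB ▸ hclosed n TB
  set P : Set (EuclideanSpace ℝ (Fin d)) := A ∩ B with hPdef
  have hPne : P.Nonempty := hAB
  have hAcomp : IsCompact A := Metric.isCompact_of_isClosed_isBounded hclosedA hAbd
  have hPcomp : IsCompact P := hAcomp.inter_right hclosedB
  set U : Fin m ⊕ Fin n → EuclideanSpace ℝ (Fin d) →ᵃ[ℝ] ℝ := Sum.elim SA TB with hU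
  have hUP : {z : EuclideanSpace ℝ (Fin d) | ∀ i, U i z ≤ 0} = P := by
    ext z
    simp only [Set.mem_setOf_eq, hPdef, Set.mem_inter_iff, hSA, hTB, Set.mem_iInter,
      Sum.forall, hU, Sum.elim_inl, Sum.elim_inr]
  set linB : Fin n → EuclideanSpace ℝ (Fin d) →L[ℝ] ℝ :=
    fun j => LinearMap.toContinuousLinearMap (TB j).linear with hlinB
  set cB : ℝ := ∑ j, ‖linB j‖ with hcB
  have hcB0 : 0 ≤ cB := Finset.sum_nonneg fun j _ => norm_nonneg _
  have hres : ∀ x ∈ A, (∑ i, max (U i x) 0) ≤ cB * Metric.infDist x B := by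
    intro x hxA
    obtain ⟨y, hyB, hyd⟩ := hclosedB.exists_infDist_eq_dist hBne x
    rw [Fintype.sum_sum_type]
    have h1 : (∑ i : Fin m, max (U (Sum.inl i) x) 0) = 0 := by
      apply Finset.sum_eq_zero
      intro i _
      have h2 : SA i x ≤ 0 := Set.mem_iInter.mp (hSA ▸ hxA) i
      simpa [hU] using max_eq_right h2
    have h2 : ∀ j : Fin n, max (U (Sum.inr j) x) 0 ≤ ‖linB j‖ * dist x y := by
      intro j
      have hTBy : TB j y ≤ 0 := Set.mem_iInter.mp (hTB ▸ hyB) j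
      have haff : TB j x = TB j y + linB j (x - y) := by
        have h := (TB j).linearMap_vsub x y
        simp only [vsub_eq_sub] at h
        have h3 : linB j (x - y) = (TB j).linear (x - y) := rfl
        rw [h3, h]; ring
      have h3 : linB j (x - y) ≤ ‖linB j‖ * ‖x - y‖ := by
        calc linB j (x - y) ≤ |linB j (x - y)| := le_abs_self _
          _ ≤ ‖linB j‖ * ‖x - y‖ := by simpa using (linB j).le_opNorm (x - y)
      have h4 : (0:ℝ) ≤ ‖linB j‖ * dist x y := by positivity
      rw [max_le_iff]
      refine ⟨?_, h4⟩
      rw [dist_eq_norm]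
      simp only [hU, Sum.elim_inr]
      linarith
    calc (∑ i : Fin m, max (U (Sum.inl i) x) 0) + ∑ j : Fin n, max (U (Sum.inr j) x) 0
        = ∑ j : Fin n, max (U (Sum.inr j) x) 0 := by rw [h1, zero_add]
      _ ≤ ∑ j : Fin n, ‖linB j‖ * dist x y := Finset.sum_le_sum fun j _ => h2 j
      _ = cB * Metric.infDist x B := by rw [hyd, hcB, Finset.sum_mul]
  have key : ∀ p : EuclideanSpace ℝ (Fin d), p ∈ P →
      ∃ ε M : ℝ, 0 < ε ∧ 0 < M ∧ ∀ x ∈ Metric.ball p ε,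
      Metric.infDist x P ≤ M * ∑ i, max (U i x) 0 := by
    intro p hp
    have hpU : ∀ i, U i p ≤ 0 := by rw [← hUP] at hp; exact hp
    obtain ⟨ε, M, hε, hM, h⟩ := localHoffman _ (EuclideanSpace ℝ (Fin d)) U p hpU
    exact ⟨ε, M, hε, hM, fun x hx => by rw [← hUP]; exact h x hx⟩
  choose! ε Mf hε hMf hloc using key
  have hcov : P ⊆ ⋃ p ∈ P, Metric.ball p (ε p / 2) := by
    intro p hp
    exact Set.mem_biUnion hp (by simp [Metric.mem_ball, half_pos (hε p hp)])
  obtain ⟨t, htP, htfin, htcov⟩ := hPcomp.elim_finite_subcover_image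
    (fun p _ => Metric.isOpen_ball) hcov
  obtain ⟨p₀, hp₀P⟩ := hPne
  obtain ⟨q₀, hq₀t, -⟩ := Set.mem_iUnion₂.mp (htcov hp₀P)
  set t' : Finset (EuclideanSpace ℝ (Fin d)) := htfin.toFinset with ht'
  have ht'mem : ∀ q, q ∈ t' ↔ q ∈ t := fun q => htfin.mem_toFinset
  have ht'ne : t'.Nonempty := ⟨q₀, (ht'mem q₀).mpr hq₀t⟩
  set r : ℝ := t'.inf' ht'ne (fun p => ε p / 2) with hrdef
  have hr0 : 0 < r := by
    rw [hrdef, Finset.lt_inf'_iff]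
    intro q hq
    exact half_pos (hε q (htP ((ht'mem q).mp hq)))
  set M₁ : ℝ := t'.sup' ht'ne Mf with hM₁def
  have hM₁pos : 0 < M₁ := by
    obtain ⟨q, hq⟩ := ht'ne
    exact lt_of_lt_of_le (hMf q (htP ((ht'mem q).mp hq))) (Finset.le_sup' Mf hq)
  obtain ⟨R, hR⟩ := hAbd.subset_closedBall p₀
  set R' : ℝ := max R 0 with hR'def
  have hRA : ∀ x ∈ A, Metric.infDist x P ≤ R' := by
    intro x hxA
    calc Metric.infDist x P ≤ dist x p₀ := Metric.infDist_le_dist_of_mem hp₀P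
      _ ≤ R := Metric.mem_closedBall.mp (hR hxA)
      _ ≤ R' := le_max_left _ _
  obtain ⟨δB, hδB0, hKbound⟩ : ∃ δB : ℝ, 0 < δB ∧
      ∀ x ∈ A, r ≤ Metric.infDist x P → δB ≤ Metric.infDist x B := by
    set K' : Set (EuclideanSpace ℝ (Fin d)) :=
      A ∩ {x | r ≤ Metric.infDist x P} with hK'def
    by_cases hK : K'.Nonempty
    · have hK'closed : IsClosed K' :=
        hclosedA.inter (isClosed_le continuous_const (Metric.continuous_infDist_pt P))
      have hK'comp : IsCompact K' :=
        Metric.isCompact_of_isClosed_isBounded hK'closed (hAbd.subset Set.inter_subset_left)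
      obtain ⟨x₀, hx₀K, hx₀min⟩ := hK'comp.exists_isMinOn hK
        (Metric.continuous_infDist_pt B).continuousOn
      refine ⟨Metric.infDist x₀ B, ?_, ?_⟩
      · rcases (Metric.infDist_nonneg (x := x₀) (s := B)).lt_or_eq with h | h
        · exact h
        · exfalso
          have hx₀B : x₀ ∈ B := (hclosedB.mem_iff_infDist_zero hBne).mpr h.symm
          have hx₀P : x₀ ∈ P := ⟨hx₀K.1, hx₀B⟩
          have : Metric.infDist x₀ P = 0 := Metric.infDist_zero_of_mem hx₀P
          have := hx₀K.2
          simp only [Set.mem_setOf_eq] at this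
          linarith
      · intro x hxA hxr
        exact isMinOn_iff.mp hx₀min x ⟨hxA, hxr⟩
    · exact ⟨1, one_pos, fun x hxA hxr => absurd ⟨hxA, hxr⟩ (fun h => hK ⟨x, h⟩)⟩
  refine ⟨max (M₁ * cB) (R' / δB) + 1, ?_, fun x hxA => ?_⟩
  · have h5 : (0:ℝ) ≤ R' / δB := div_nonneg (le_max_right R 0) hδB0.le
    have h6 : R' / δB ≤ max (M₁ * cB) (R' / δB) := le_max_right _ _
    linarith
  have hMtot : ∀ c : ℝ, c ≤ max (M₁ * cB) (R' / δB) →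
      c * Metric.infDist x B ≤ (max (M₁ * cB) (R' / δB) + 1) * Metric.infDist x B := by
    intro c hc
    apply mul_le_mul_of_nonneg_right _ Metric.infDist_nonneg
    linarith
  by_cases hx : Metric.infDist x P < r
  · obtain ⟨s, hsP, hsd⟩ := (Metric.infDist_lt_iff ⟨p₀, hp₀P⟩).mp hx
    obtain ⟨q, hqt, hsq⟩ := Set.mem_iUnion₂.mp (htcov hsP)
    have hq' : q ∈ t' := (ht'mem q).mpr hqt
    have hxq : x ∈ Metric.ball q (ε q) := by
      rw [Metric.mem_ball]
      have h7 : dist s q < ε q / 2 := Metric.mem_ball.mp hsq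
      have h8 : r ≤ ε q / 2 := Finset.inf'_le _ hq'
      calc dist x q ≤ dist x s + dist s q := dist_triangle _ _ _
        _ < r + ε q / 2 := by linarith
        _ ≤ ε q := by linarith
    have hqP : q ∈ P := htP hqt
    calc Metric.infDist x P ≤ Mf q * ∑ i, max (U i x) 0 := hloc q hqP x hxq
      _ ≤ Mf q * (cB * Metric.infDist x B) :=
          mul_le_mul_of_nonneg_left (hres x hxA) (hMf q hqP).le
      _ = (Mf q * cB) * Metric.infDist x B := by ring
      _ ≤ (max (M₁ * cB) (R' / δB) + 1) * Metric.infDist x B := by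
          apply hMtot
          calc Mf q * cB ≤ M₁ * cB :=
                mul_le_mul_of_nonneg_right (Finset.le_sup' Mf hq') hcB0
            _ ≤ _ := le_max_left _ _
  · push_neg at hx
    have h9 : δB ≤ Metric.infDist x B := hKbound x hxA hx
    calc Metric.infDist x P ≤ R' := hRA x hxA
      _ = (R' / δB) * δB := by field_simp
      _ ≤ (R' / δB) * Metric.infDist x B :=
          mul_le_mul_of_nonneg_left h9 (div_nonneg (le_max_right R 0) hδB0.le)
      _ ≤ (max (M₁ * cB) (R' / δB) + 1) * Metric.infDist x B := hMtot _ (le_max_right _ _)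
end
end

section
/- Let P ⊂ ℝ^d be a polytope with a representation P = ⋂_{j=1}^ℓ {x ∈ ℝ^d : T_j(x) ≤ 0}, where each T_j : ℝ^d → ℝ is affine with Lipschitz constant 1. Then there exists a constant c_P > 0 such that for every x ∈ ℝ^d and every j ∈ {1, …, ℓ}: T_j(x)⁺ ≤ dist_P(x) and dist_P(x) ≤ c_P · Σ_{j=1}^ℓ T_j(x)⁺. -/
set_option maxHeartbeats 1000000

noncomputable section

open Metric Set

local notation "⟪" x ", " y "⟫" => @inner ℝ _ _ x y

/-- If a family of vectors has the property that its dual cone is contained in its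
orthogonal complement, then every linear combination of the family is a *nonnegative*
linear combination. -/
lemma farkas_subspace {E : Type*} [NormedAddCommGroup E] [InnerProductSpace ℝ E]
    [FiniteDimensional ℝ E] {n : ℕ} (a : Fin n → E)
    (hdual : ∀ v : E, (∀ j, ⟪a j, v⟫ ≤ 0) → ∀ j, ⟪a j, v⟫ = 0)
    (μ : Fin n → ℝ) :
    ∃ ν : Fin n → ℝ, (∀ j, 0 ≤ ν j) ∧ ∑ j, μ j • a j = ∑ j, ν j • a j := by
  classical
  let Φ : (Fin n → ℝ) →ₗ[ℝ] E :=
    { toFun := fun ν => ∑ j, ν j • a j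
      map_add' := fun ν₁ ν₂ => by
        simp [add_smul, Finset.sum_add_distrib]
      map_smul' := fun t ν => by
        simp [mul_smul, Finset.smul_sum] }
  have hΦ : ∀ ν : Fin n → ℝ, Φ ν = ∑ j, ν j • a j := fun _ => rfl
  set C : Set E := {x | ∃ ν : Fin n → ℝ, (∀ j, 0 ≤ ν j) ∧ Φ ν = x} with hCdef
  have hCconv : Convex ℝ C := by
    rintro x ⟨ν₁, hν₁, rfl⟩ y ⟨ν₂, hν₂, rfl⟩ s t hs ht _
    exact ⟨s • ν₁ + t • ν₂,
      fun j => add_nonneg (mul_nonneg hs (hν₁ j)) (mul_nonneg ht (hν₂ j)),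
      by simp [map_add, map_smul]⟩
  have hCV : C ⊆ (LinearMap.range Φ : Set E) := by
    rintro x ⟨ν, _, rfl⟩; exact ⟨ν, rfl⟩
  have haC : ∀ j, a j ∈ C := by
    intro j
    refine ⟨fun k => if k = j then 1 else 0, fun k => by positivity, ?_⟩
    simp [hΦ, ite_smul]
  have h0C : (0 : E) ∈ C := ⟨0, fun j => le_rfl, by simp [hΦ]⟩
  -- Step 1 : every element of the range of Φ is in the closure of C
  have hstep1 : ∀ w ∈ LinearMap.range Φ, w ∈ closure C := by
    intro w hw
    by_contra hnot
    obtain ⟨f, u, hfu, huw⟩ :=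
      geometric_hahn_banach_closed_point (hCconv.closure) isClosed_closure hnot
    have hu0 : 0 < u := by
      have := hfu 0 (subset_closure h0C); simpa using this
    have hfC : ∀ x ∈ C, f x ≤ 0 := by
      intro x hx
      by_contra h
      push_neg at h
      obtain ⟨ν, hν, rfl⟩ := hx
      have ht : (0:ℝ) ≤ (max u 0 + 1) / f (Φ ν) := by positivity
      have hmem : ((max u 0 + 1) / f (Φ ν)) • Φ ν ∈ C := by
        refine ⟨((max u 0 + 1) / f (Φ ν)) • ν, fun j => mul_nonneg ht (hν j), by simp [map_smul]⟩
      have := hfu _ (subset_closure hmem)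
      rw [map_smul, smul_eq_mul, div_mul_cancel₀ _ (ne_of_gt h)] at this
      have : u < u := lt_of_le_of_lt (by linarith [le_max_left u 0]) this
      exact lt_irrefl _ this
    set v := (InnerProductSpace.toDual ℝ E).symm f with hv
    have hvy : ∀ y : E, ⟪v, y⟫ = f y := fun y => InnerProductSpace.toDual_symm_apply
    have hva : ∀ j, ⟪a j, v⟫ = 0 := by
      refine hdual v (fun j => ?_)
      rw [real_inner_comm, hvy]
      exact hfC _ (haC j)
    obtain ⟨μ', rfl⟩ := hw
    have hfw : f (Φ μ') = 0 := by
      rw [← hvy, hΦ, inner_sum]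
      refine Finset.sum_eq_zero fun j _ => ?_
      rw [real_inner_smul_right, real_inner_comm, hva j, mul_zero]
    rw [hfw] at huw
    exact absurd huw (not_lt.mpr hu0.le)
  -- Step 2 : interior point of C inside the range of Φ
  obtain ⟨σ, hσ⟩ := Φ.rangeRestrict.exists_rightInverse_of_surjective
      (LinearMap.range_rangeRestrict Φ)
  let σc := LinearMap.toContinuousLinearMap σ
  set Kσ : ℝ := ‖σc‖ with hKσ
  have hKσ0 : 0 ≤ Kσ := hKσ ▸ ContinuousLinearMap.opNorm_nonneg _
  set δ : ℝ := 1 / (Kσ + 1) with hδdef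
  have hδ : 0 < δ := by positivity
  set q : E := Φ (fun _ => 1) with hq
  have hqV : q ∈ LinearMap.range Φ := ⟨_, rfl⟩
  have hΦcoe : ∀ y : LinearMap.range Φ, Φ (σ y) = (y : E) := by
    intro y
    have := congrArg (fun g => (g y : E)) hσ
    simpa using this
  have hinterior : ∀ w ∈ LinearMap.range Φ, ‖w - q‖ < δ → w ∈ C := by
    intro w hw hnear
    have he : w - q ∈ LinearMap.range Φ := sub_mem hw hqV
    set e : LinearMap.range Φ := ⟨w - q, he⟩ with hedef
    have hne : ‖e‖ = ‖w - q‖ := rfl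
    have h1 : ∀ j, |σ e j| ≤ Kσ * ‖w - q‖ := by
      intro j
      calc |σ e j| ≤ ‖σ e‖ := by
            simpa [Real.norm_eq_abs] using norm_le_pi_norm (σ e) j
        _ = ‖σc e‖ := rfl
        _ ≤ Kσ * ‖e‖ := σc.le_opNorm e
        _ = Kσ * ‖w - q‖ := by rw [hne]
    have hcoef : ∀ j, 0 ≤ 1 + σ e j := by
      intro j
      have h2 : Kσ * ‖w - q‖ ≤ Kσ * δ := mul_le_mul_of_nonneg_left hnear.le hKσ0
      have h3 : Kσ * δ < 1 := by
        rw [hδdef]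
        rw [mul_one_div, div_lt_one (by positivity)]
        linarith
      have := (abs_le.mp (h1 j)).1
      linarith
    refine ⟨(fun _ => 1) + σ e, hcoef, ?_⟩
    rw [map_add, hΦcoe e]
    show q + (w - q) = w
    abel
  -- Step 3 : conclude
  have hΦμV : Φ μ ∈ LinearMap.range Φ := ⟨μ, rfl⟩
  have h2q : (2:ℝ) • Φ μ - q ∈ LinearMap.range Φ :=
    sub_mem (Submodule.smul_mem _ _ hΦμV) hqV
  obtain ⟨cpt, hcptC, hcdist⟩ := Metric.mem_closure_iff.mp (hstep1 _ h2q) δ hδ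
  have hq'mem : (2:ℝ) • Φ μ - cpt ∈ C := by
    refine hinterior _ (sub_mem (Submodule.smul_mem _ _ hΦμV) (hCV hcptC)) ?_
    have : (2:ℝ) • Φ μ - cpt - q = ((2:ℝ) • Φ μ - q) - cpt := by abel
    rw [this, ← dist_eq_norm]
    exact hcdist
  obtain ⟨ν₁, hν₁, hν₁e⟩ := hcptC
  obtain ⟨ν₂, hν₂, hν₂e⟩ := hq'mem
  refine ⟨(2:ℝ)⁻¹ • (ν₁ + ν₂), fun j => by
    have := hν₁ j; have := hν₂ j
    simp only [Pi.smul_apply, Pi.add_apply, smul_eq_mul]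
    positivity, ?_⟩
  have hsum : Φ ν₁ + Φ ν₂ = (2:ℝ) • Φ μ := by
    rw [hν₁e, hν₂e]; abel
  have : Φ ((2:ℝ)⁻¹ • (ν₁ + ν₂)) = Φ μ := by
    rw [map_smul, map_add, hsum, smul_smul]
    norm_num
  rw [← hΦ, ← this, hΦ]

/-- On the orthogonal complement of the joint kernel of the functionals `⟪b j, ·⟫`,
the norm is controlled by the values of these functionals. -/
lemma norm_le_sum_inner {E : Type*} [NormedAddCommGroup E] [InnerProductSpace ℝ E]
    [FiniteDimensional ℝ E] {n : ℕ} (b : Fin n → E) (W : Submodule ℝ E)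
    (hW : ∀ v : E, v ∈ W ↔ ∀ j, ⟪b j, v⟫ = 0) :
    ∃ K : ℝ, 0 ≤ K ∧ ∀ u ∈ Wᗮ, ‖u‖ ≤ K * ∑ j, |⟪b j, u⟫| := by
  classical
  let L : E →ₗ[ℝ] (Fin n → ℝ) := LinearMap.pi (fun j => (innerSL ℝ (b j)).toLinearMap)
  have hL : ∀ (v : E) (j : Fin n), L v j = ⟪b j, v⟫ := fun v j => rfl
  let L₀ : Wᗮ →ₗ[ℝ] (Fin n → ℝ) := L.comp Wᗮ.subtype
  have hker : LinearMap.ker L₀ = ⊥ := by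
    rw [LinearMap.ker_eq_bot']
    intro m hm
    have hmW : (m : E) ∈ W := by
      rw [hW]
      intro j
      have := congrFun hm j
      exact this
    have : ⟪(m : E), (m : E)⟫ = 0 := by
      have := m.2
      rw [Submodule.mem_orthogonal] at this
      exact this _ hmW
    have : (m : E) = 0 := by
      rwa [real_inner_self_eq_norm_sq, pow_eq_zero_iff (by norm_num), norm_eq_zero] at this
    exact Subtype.ext this
  obtain ⟨g, hg⟩ := L₀.exists_leftInverse_of_injective hker
  let gc := LinearMap.toContinuousLinearMap g
  refine ⟨‖gc‖, ContinuousLinearMap.opNorm_nonneg _, ?_⟩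
  intro u hu
  have h1 : (g (L₀ ⟨u, hu⟩) : E) = u := by
    have := congrArg (fun h => ((h ⟨u, hu⟩ : Wᗮ) : E)) hg
    simpa using this
  have h2 : ‖u‖ ≤ ‖gc‖ * ‖L₀ ⟨u, hu⟩‖ := by
    calc ‖u‖ = ‖(g (L₀ ⟨u, hu⟩) : E)‖ := by rw [h1]
      _ = ‖gc (L₀ ⟨u, hu⟩)‖ := rfl
      _ ≤ ‖gc‖ * ‖L₀ ⟨u, hu⟩‖ := gc.le_opNorm _
  refine h2.trans (mul_le_mul_of_nonneg_left ?_ (ContinuousLinearMap.opNorm_nonneg _))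
  rw [pi_norm_le_iff_of_nonneg (by positivity)]
  intro i
  have : ‖L₀ ⟨u, hu⟩ i‖ = |⟪b i, u⟫| := by
    simp [L₀, hL, Real.norm_eq_abs]
  rw [this]
  exact Finset.single_le_sum (f := fun j => |⟪b j, u⟫|) (fun j _ => abs_nonneg _) (Finset.mem_univ i)

/-- For a polytope `P = ⋂_{j=1}^ℓ {T_j ≤ 0}` represented by `1`-Lipschitz affine functions
`T_j`, there is a constant `c_P > 0` such that `T_j(x)⁺ ≤ dist_P(x)` for every `j`, and
`dist_P(x) ≤ c_P ∑_j T_j(x)⁺`, for every `x ∈ ℝ^d`. -/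
theorem polytope_dist_estimates {d ℓ : ℕ} (P : Set (EuclideanSpace ℝ (Fin d)))
    (hPne : P.Nonempty) (hPbd : Bornology.IsBounded P)
    (T : Fin ℓ → (EuclideanSpace ℝ (Fin d) →ᵃ[ℝ] ℝ))
    (hlip : ∀ j, LipschitzWith 1 (T j))
    (hrep : P = ⋂ j, {x | T j x ≤ 0}) :
    ∃ c : ℝ, 0 < c ∧ ∀ x : EuclideanSpace ℝ (Fin d),
      (∀ j, max (T j x) 0 ≤ Metric.infDist x P) ∧
      Metric.infDist x P ≤ c * ∑ j, max (T j x) 0 := by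
  classical
  have hmemP : ∀ y, y ∈ P ↔ ∀ j, T j y ≤ 0 := by
    intro y; rw [hrep]; simp [Set.mem_iInter]
  have hlipd : ∀ (j) (x y : EuclideanSpace ℝ (Fin d)), T j x - T j y ≤ ‖x - y‖ := by
    intro j x y
    have h := (hlip j).dist_le_mul x y
    rw [Real.dist_eq, dist_eq_norm] at h
    calc T j x - T j y ≤ |T j x - T j y| := le_abs_self _
      _ ≤ ‖x - y‖ := by simpa using h
  -- the easy estimate
  have heasy : ∀ x, ∀ j, max (T j x) 0 ≤ Metric.infDist x P := by
    intro x j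
    apply max_le _ Metric.infDist_nonneg
    by_contra h
    push_neg at h
    obtain ⟨y, hyP, hyd⟩ := (Metric.infDist_lt_iff hPne).mp h
    have h1 : T j y ≤ 0 := (hmemP y).mp hyP j
    have h2 : T j x - T j y ≤ dist x y := by
      rw [dist_eq_norm]; exact hlipd j x y
    linarith
  -- trivial case of no constraints
  rcases Nat.eq_zero_or_pos ℓ with hℓ | hℓ
  · subst hℓ
    refine ⟨1, one_pos, fun x => ⟨heasy x, ?_⟩⟩
    have hPuniv : P = Set.univ := by rw [hrep]; exact Set.iInter_of_empty _
    rw [hPuniv, Metric.infDist_zero_of_mem (Set.mem_univ x)]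
    simp
  have hℓ' : (0:ℝ) < (ℓ:ℝ) := by exact_mod_cast hℓ
  -- the gradient vectors
  set a : Fin ℓ → EuclideanSpace ℝ (Fin d) := fun j =>
    (InnerProductSpace.toDual ℝ _).symm (LinearMap.toContinuousLinearMap (T j).linear) with hadef
  have ha : ∀ (j) (v : EuclideanSpace ℝ (Fin d)), ⟪a j, v⟫ = (T j).linear v := by
    intro j v
    simp [hadef, InnerProductSpace.toDual_symm_apply]
  have hTaff : ∀ (j) (x y : EuclideanSpace ℝ (Fin d)),
      T j x = (T j).linear (x - y) + T j y := by
    intro j x y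
    conv_lhs => rw [show x = (x - y) +ᵥ y by simp]
    rw [AffineMap.map_vadd]
    rfl
  have hlin_bound : ∀ (j) (v : EuclideanSpace ℝ (Fin d)), |(T j).linear v| ≤ ‖v‖ := by
    intro j v
    have h := hlipd j v 0
    have h' := hlipd j 0 v
    have e : T j v - T j 0 = (T j).linear v := by
      rw [hTaff j v 0]; simp
    rw [abs_le]
    constructor
    · have : -(T j v - T j 0) ≤ ‖v‖ := by
        have := h'
        simp only [zero_sub, norm_neg] at this ⊢
        linarith [hlipd j 0 v, (by rw [zero_sub, norm_neg] : ‖(0:EuclideanSpace ℝ (Fin d)) - v‖ = ‖v‖)]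
      rw [e] at this; linarith
    · rw [← e]; simpa using h
  -- convexity of P
  have hPconv : Convex ℝ P := by
    rw [hrep]
    exact convex_iInter fun j => (convex_Iic (0:ℝ)).affine_preimage (T j)
  -- witnesses and the relative interior point z
  have hwex : ∀ j : Fin ℓ, ∃ p, p ∈ P ∧ ((∃ q ∈ P, T j q < 0) → T j p < 0) := by
    intro j
    by_cases h : ∃ q ∈ P, T j q < 0
    · obtain ⟨q, hq, hlt⟩ := h
      exact ⟨q, hq, fun _ => hlt⟩
    · exact ⟨hPne.choose, hPne.choose_spec, fun h' => absurd h' h⟩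
  choose w hwP hwneg using hwex
  set z : EuclideanSpace ℝ (Fin d) := (ℓ:ℝ)⁻¹ • ∑ j, w j with hzdef
  have hzP : z ∈ P := by
    have hz2 : z = ∑ j : Fin ℓ, (ℓ:ℝ)⁻¹ • w j := by rw [hzdef, Finset.smul_sum]
    rw [hz2]
    refine hPconv.sum_mem (fun i _ => by positivity) ?_ (fun i _ => hwP i)
    rw [Finset.sum_const, Finset.card_univ, Fintype.card_fin, nsmul_eq_mul]
    field_simp
  have hTz : ∀ j, T j z = (ℓ:ℝ)⁻¹ * ∑ k, T j (w k) := by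
    intro j
    have h1 : T j z = (T j).linear z + T j 0 := by rw [hTaff j z 0]; simp
    have h2 : ∀ k, T j (w k) = (T j).linear (w k) + T j 0 := by
      intro k; rw [hTaff j (w k) 0]; simp
    have h3 : (T j).linear z = (ℓ:ℝ)⁻¹ * ∑ k, (T j).linear (w k) := by
      rw [hzdef, map_smul, map_sum]; simp
    rw [h1, h3]
    have h4 : ∑ k, T j (w k) = (∑ k, (T j).linear (w k)) + (ℓ:ℝ) * T j 0 := by
      simp only [h2, Finset.sum_add_distrib, Finset.sum_const, Finset.card_univ,
        Fintype.card_fin, nsmul_eq_mul]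
    rw [h4]
    field_simp
  have hstrict : ∀ j, (∃ q ∈ P, T j q < 0) → T j z < 0 := by
    intro j hq
    rw [hTz j]
    have hsum : ∑ k, T j (w k) < 0 := by
      have h1 : ∀ k ∈ Finset.univ, T j (w k) ≤ (fun _ => (0:ℝ)) k :=
        fun k _ => (hmemP (w k)).mp (hwP k) j
      have h2 : ∑ k, T j (w k) < ∑ k : Fin ℓ, (0:ℝ) := by
        refine Finset.sum_lt_sum h1 ⟨j, Finset.mem_univ j, hwneg j hq⟩
      simpa using h2
    exact mul_neg_of_pos_of_neg (by positivity) hsum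
  have hJ0P : ∀ j, T j z = 0 → ∀ p ∈ P, T j p = 0 := by
    intro j hz p hp
    by_contra h
    have h1 : T j p ≤ 0 := (hmemP p).mp hp j
    have h2 : T j p < 0 := lt_of_le_of_ne h1 h
    have := hstrict j ⟨p, hp, h2⟩
    rw [hz] at this
    exact lt_irrefl _ this
  -- the set of constraints that vanish identically on P
  set J₀ : Finset (Fin ℓ) := Finset.univ.filter (fun j => T j z = 0) with hJ₀def
  have hJ₀mem : ∀ j, j ∈ J₀ ↔ T j z = 0 := by
    intro j; simp [hJ₀def]
  -- slack for the other constraints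
  obtain ⟨r₀, hr₀pos, hr₀⟩ : ∃ r₀ : ℝ, 0 < r₀ ∧ ∀ j ∉ J₀, T j z ≤ -r₀ := by
    rcases (Finset.univ.filter (fun j => j ∉ J₀)).eq_empty_or_nonempty with he | hne
    · refine ⟨1, one_pos, fun j hj => ?_⟩
      exact absurd hj (by simpa using (Finset.filter_eq_empty_iff.mp he) (Finset.mem_univ j))
    · refine ⟨(Finset.univ.filter (fun j => j ∉ J₀)).inf' hne (fun j => -(T j z)), ?_, ?_⟩
      · rw [Finset.lt_inf'_iff]
        intro j hj
        rw [Finset.mem_filter] at hj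
        have h1 : T j z ≤ 0 := (hmemP z).mp hzP j
        have h2 : T j z ≠ 0 := by
          intro h; exact hj.2 ((hJ₀mem j).mpr h)
        have : T j z < 0 := lt_of_le_of_ne h1 h2
        linarith
      · intro j hj
        have hmem : j ∈ Finset.univ.filter (fun j => j ∉ J₀) := by
          simp [hj]
        have := Finset.inf'_le (fun j => -(T j z)) hmem
        linarith
  -- modified family
  set b : Fin ℓ → EuclideanSpace ℝ (Fin d) := fun j => if j ∈ J₀ then a j else 0 with hbdef
  -- dual cone property
  have hdual : ∀ v : EuclideanSpace ℝ (Fin d), (∀ j, ⟪b j, v⟫ ≤ 0) → ∀ j, ⟪b j, v⟫ = 0 := by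
    intro v hv j
    by_cases hj : j ∈ J₀
    swap
    · simp [hbdef, hj]
    set ε : ℝ := r₀ / (‖v‖ + 1) with hεdef
    have hε : 0 < ε := by positivity
    have hTk : ∀ k, T k (z + ε • v) = T k z + ε * ((T k).linear v) := by
      intro k
      rw [hTaff k (z + ε • v) z]
      simp [map_smul]
      ring
    have hzv : z + ε • v ∈ P := by
      rw [hmemP]
      intro k
      rw [hTk k]
      by_cases hkJ : k ∈ J₀
      · have h1 : T k z = 0 := (hJ₀mem k).mp hkJ
        have h2 : (T k).linear v ≤ 0 := by
          have h := hv k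
          rw [hbdef] at h
          simp only [hkJ, if_true] at h
          rwa [ha] at h
        rw [h1]
        simpa using mul_nonpos_of_nonneg_of_nonpos hε.le h2
      · have h1 : T k z ≤ -r₀ := hr₀ k hkJ
        have h2 : (T k).linear v ≤ ‖v‖ := le_trans (le_abs_self _) (hlin_bound k v)
        have h3 : ε * (T k).linear v ≤ ε * ‖v‖ := mul_le_mul_of_nonneg_left h2 hε.le
        have h4 : ε * ‖v‖ < r₀ := by
          rw [hεdef]
          rw [div_mul_eq_mul_div, div_lt_iff₀ (by positivity)]
          nlinarith [norm_nonneg v]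
        linarith
    have h5 : T j (z + ε • v) = 0 := hJ0P j ((hJ₀mem j).mp hj) _ hzv
    rw [hTk j, (hJ₀mem j).mp hj, zero_add] at h5
    have h6 : (T j).linear v = 0 := by
      rcases mul_eq_zero.mp h5 with h | h
      · exact absurd h (ne_of_gt hε)
      · exact h
    rw [hbdef]
    simp only [hj, if_true]
    rw [ha]
    exact h6
  -- Farkas coefficients
  have hfark : ∀ j₀ : Fin ℓ, ∃ ν : Fin ℓ → ℝ, (∀ j, 0 ≤ ν j) ∧
      (j₀ ∈ J₀ → -(a j₀) = ∑ j, ν j • b j) := by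
    intro j₀
    by_cases hj₀ : j₀ ∈ J₀
    · obtain ⟨ν, hν0, hνe⟩ := farkas_subspace b hdual (fun k => if k = j₀ then (-1:ℝ) else 0)
      refine ⟨ν, hν0, fun _ => ?_⟩
      rw [← hνe]
      rw [Finset.sum_eq_single j₀]
      · simp [hbdef, hj₀]
      · intro k _ hk; simp [hk]
      · intro h; exact absurd (Finset.mem_univ j₀) h
    · exact ⟨0, fun j => le_rfl, fun h => absurd h hj₀⟩
  choose ν hν0 hνe using hfark
  set Cν : ℝ := ∑ j₀, ∑ j, ν j₀ j with hCνdef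
  have hCν0 : 0 ≤ Cν := Finset.sum_nonneg fun j₀ _ => Finset.sum_nonneg fun j _ => hν0 j₀ j
  have hNle : ∀ j₀ : Fin ℓ, ∑ j, ν j₀ j ≤ Cν :=
    fun j₀ => Finset.single_le_sum
      (f := fun j₀ => ∑ j, ν j₀ j)
      (fun i _ => Finset.sum_nonneg fun j _ => hν0 i j) (Finset.mem_univ j₀)
  -- notation for the residual sum
  set S : EuclideanSpace ℝ (Fin d) → ℝ := fun x => ∑ j, max (T j x) 0 with hSdef
  have hS0 : ∀ x, 0 ≤ S x := fun x => Finset.sum_nonneg fun j _ => le_max_right _ _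
  have hSmem : ∀ x j, max (T j x) 0 ≤ S x := fun x j =>
    Finset.single_le_sum (f := fun j => max (T j x) 0)
      (fun i _ => le_max_right _ _) (Finset.mem_univ j)
  have hTxz : ∀ (j) (x : EuclideanSpace ℝ (Fin d)), T j x = ⟪a j, x - z⟫ + T j z := by
    intro j x
    rw [ha]
    exact hTaff j x z
  -- the key consequence of Farkas: negative parts controlled
  have hE : ∀ (x : EuclideanSpace ℝ (Fin d)), ∀ j₀ ∈ J₀, -(T j₀ x) ≤ Cν * S x := by
    intro x j₀ hj₀
    have h1 : -(T j₀ x) = ⟪-(a j₀), x - z⟫ := by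
      rw [hTxz j₀ x, (hJ₀mem j₀).mp hj₀, add_zero, inner_neg_left]
    rw [h1, hνe j₀ hj₀, sum_inner]
    have h2 : ∀ j : Fin ℓ, ⟪ν j₀ j • b j, x - z⟫ ≤ ν j₀ j * S x := by
      intro j
      rw [real_inner_smul_left]
      by_cases hj : j ∈ J₀
      · have hb : ⟪b j, x - z⟫ = T j x := by
          rw [hbdef]
          simp only [hj, if_true]
          rw [hTxz j x, (hJ₀mem j).mp hj, add_zero]
        rw [hb]
        have : T j x ≤ S x := le_trans (le_max_left _ _) (hSmem x j)
        exact mul_le_mul_of_nonneg_left this (hν0 j₀ j)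
      · have hb : ⟪b j, x - z⟫ = 0 := by
          rw [hbdef]; simp [hj]
        rw [hb, mul_zero]
        exact mul_nonneg (hν0 j₀ j) (hS0 x)
    calc ∑ j, ⟪ν j₀ j • b j, x - z⟫ ≤ ∑ j, ν j₀ j * S x := Finset.sum_le_sum fun j _ => h2 j
      _ = (∑ j, ν j₀ j) * S x := by rw [← Finset.sum_mul]
      _ ≤ Cν * S x := mul_le_mul_of_nonneg_right (hNle j₀) (hS0 x)
  -- the joint kernel subspace
  set W : Submodule ℝ (EuclideanSpace ℝ (Fin d)) :=
    { carrier := {v | ∀ j, ⟪b j, v⟫ = 0}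
      add_mem' := fun hx hy => by
        intro j
        rw [inner_add_right, hx j, hy j, add_zero]
      zero_mem' := fun j => inner_zero_right _
      smul_mem' := fun c x hx => by
        intro j
        rw [inner_smul_right, hx j, mul_zero] } with hWdef
  have hWmem : ∀ v, v ∈ W ↔ ∀ j, ⟪b j, v⟫ = 0 := fun v => Iff.rfl
  obtain ⟨K, hK0, hKle⟩ := norm_le_sum_inner b W hWmem
  -- P is contained in a ball around z
  obtain ⟨R, hR⟩ := hPbd.subset_closedBall z
  have hR0 : 0 ≤ R := by
    have := hR hzP
    rw [Metric.mem_closedBall, dist_self] at this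
    exact this
  -- the estimate on the affine piece A = {T j = 0 for j ∈ J₀}
  have hinner : ∀ y : EuclideanSpace ℝ (Fin d), (∀ j ∈ J₀, T j y = 0) →
      Metric.infDist y P ≤ (R / r₀) * S y := by
    intro y hy
    have hs0 : 0 ≤ S y := hS0 y
    set θ : ℝ := S y / (S y + r₀) with hθdef
    have hsr : 0 < S y + r₀ := by linarith
    have hθ0 : 0 ≤ θ := by positivity
    have hθ1 : θ ≤ 1 := by
      rw [hθdef, div_le_one hsr]; linarith
    set y' : EuclideanSpace ℝ (Fin d) := y + θ • (z - y) with hy'def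
    have hTy' : ∀ j, T j y' = T j y + θ * (T j z - T j y) := by
      intro j
      rw [hTaff j y' y]
      have : y' - y = θ • (z - y) := by rw [hy'def, add_sub_cancel_left]
      rw [this, map_smul]
      have h2 : (T j).linear (z - y) = T j z - T j y := by
        rw [hTaff j z y]; ring
      rw [h2, smul_eq_mul]; ring
    have hy'P : y' ∈ P := by
      rw [hmemP]
      intro j
      rw [hTy' j]
      by_cases hj : j ∈ J₀
      · rw [hy j hj, (hJ₀mem j).mp hj]
        norm_num
      · have h1 : T j z ≤ -r₀ := hr₀ j hj
        have h2 : T j y ≤ S y := le_trans (le_max_left _ _) (hSmem y j)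
        have hθs : θ * (S y + r₀) = S y := div_mul_cancel₀ _ (ne_of_gt hsr)
        nlinarith [mul_le_mul_of_nonneg_left h1 hθ0, mul_le_mul_of_nonneg_left h2 (by linarith : 0 ≤ 1 - θ)]
    have hd1 : Metric.infDist y P ≤ θ * ‖z - y‖ := by
      have : Metric.infDist y P ≤ dist y y' := Metric.infDist_le_dist_of_mem hy'P
      rw [dist_eq_norm] at this
      have he : y - y' = -(θ • (z - y)) := by rw [hy'def, sub_add_cancel_left]
      rw [he, norm_neg, norm_smul, Real.norm_eq_abs, abs_of_nonneg hθ0] at this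
      exact this
    have hd2 : (1 - θ) * ‖z - y‖ ≤ R := by
      have h1 : z - y' = (1 - θ) • (z - y) := by
        rw [hy'def, sub_smul, one_smul, sub_add_eq_sub_sub]
      have h2 : dist y' z ≤ R := by
        have := hR hy'P
        rwa [Metric.mem_closedBall] at this
      rw [dist_comm, dist_eq_norm, h1, norm_smul, Real.norm_eq_abs,
        abs_of_nonneg (by linarith : (0:ℝ) ≤ 1 - θ)] at h2
      exact h2
    have h1θ : 1 - θ = r₀ / (S y + r₀) := by
      rw [hθdef]
      field_simp
      ring
    have key : θ * ‖z - y‖ = (S y / r₀) * ((1 - θ) * ‖z - y‖) := by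
      rw [h1θ, hθdef]
      field_simp
    calc Metric.infDist y P ≤ θ * ‖z - y‖ := hd1
      _ = (S y / r₀) * ((1 - θ) * ‖z - y‖) := key
      _ ≤ (S y / r₀) * R := mul_le_mul_of_nonneg_left hd2 (by positivity)
      _ = (R / r₀) * S y := by ring
  -- final constant
  set C₁ : ℝ := K * (1 + (ℓ:ℝ) * Cν) with hC₁def
  have hC₁0 : 0 ≤ C₁ := by
    have : (0:ℝ) ≤ (ℓ:ℝ) * Cν := mul_nonneg (by positivity) hCν0
    exact mul_nonneg hK0 (by linarith)
  set c' : ℝ := (R / r₀) * (1 + (ℓ:ℝ) * C₁) + C₁ with hc'def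
  have hc'0 : 0 ≤ c' := by
    have h1 : (0:ℝ) ≤ R / r₀ := by positivity
    have h2 : (0:ℝ) ≤ (ℓ:ℝ) * C₁ := mul_nonneg (by positivity) hC₁0
    have h3 : (0:ℝ) ≤ R / r₀ * (1 + (ℓ:ℝ) * C₁) := mul_nonneg h1 (by linarith)
    rw [hc'def]
    linarith
  refine ⟨c' + 1, by linarith, fun x => ⟨heasy x, ?_⟩⟩
  -- orthogonal projection onto the affine subspace through z with direction W
  set p : EuclideanSpace ℝ (Fin d) := z + (↑(W.orthogonalProjectionOnto (x - z)) : EuclideanSpace ℝ (Fin d)) with hpdef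
  have hpz : p - z = (↑(W.orthogonalProjectionOnto (x - z)) : EuclideanSpace ℝ (Fin d)) := by
    rw [hpdef, add_sub_cancel_left]
  have hpA : ∀ j ∈ J₀, T j p = 0 := by
    intro j hj
    rw [hTaff j p z, (hJ₀mem j).mp hj, add_zero, hpz, ← ha]
    have hmem : (↑(W.orthogonalProjectionOnto (x - z)) : EuclideanSpace ℝ (Fin d)) ∈ W :=
      SetLike.coe_mem _
    have := (hWmem _).mp hmem j
    rw [hbdef] at this
    simpa [hj] using this
  have hup : x - p ∈ Wᗮ := by
    have h1 : x - p = (x - z) - (↑(W.orthogonalProjectionOnto (x - z)) : EuclideanSpace ℝ (Fin d)) := by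
      rw [hpdef, sub_add_eq_sub_sub]
    rw [h1]
    exact W.sub_starProjection_mem_orthogonal (x - z)
  have hxp : ‖x - p‖ ≤ K * ∑ j, |⟪b j, x - p⟫| := hKle _ hup
  have hbound : ∀ j, |⟪b j, x - p⟫| ≤ max (T j x) 0 + Cν * S x := by
    intro j
    have hCS : 0 ≤ Cν * S x := mul_nonneg hCν0 (hS0 x)
    by_cases hj : j ∈ J₀
    · have h1 : ⟪b j, x - p⟫ = T j x := by
        rw [hbdef]
        simp only [hj, if_true]
        rw [ha]
        have := hTaff j x p
        rw [hpA j hj, add_zero] at this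
        exact this.symm
      rw [h1]
      rw [abs_le]
      constructor
      · have := hE x j hj
        have h2 : (0:ℝ) ≤ max (T j x) 0 := le_max_right _ _
        linarith
      · have h2 : T j x ≤ max (T j x) 0 := le_max_left _ _
        linarith
    · have h1 : ⟪b j, x - p⟫ = 0 := by rw [hbdef]; simp [hj]
      rw [h1, abs_zero]
      have h2 : (0:ℝ) ≤ max (T j x) 0 := le_max_right _ _
      linarith
  have hxp2 : ‖x - p‖ ≤ C₁ * S x := by
    have h1 : ∑ j, |⟪b j, x - p⟫| ≤ ∑ j : Fin ℓ, (max (T j x) 0 + Cν * S x) :=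
      Finset.sum_le_sum fun j _ => hbound j
    have h2 : ∑ j : Fin ℓ, (max (T j x) 0 + Cν * S x) = S x + (ℓ:ℝ) * (Cν * S x) := by
      rw [Finset.sum_add_distrib, Finset.sum_const, Finset.card_univ, Fintype.card_fin,
        nsmul_eq_mul, hSdef]
    calc ‖x - p‖ ≤ K * ∑ j, |⟪b j, x - p⟫| := hxp
      _ ≤ K * (S x + (ℓ:ℝ) * (Cν * S x)) := by
          apply mul_le_mul_of_nonneg_left _ hK0
          rw [← h2]; exact h1
      _ = C₁ * S x := by rw [hC₁def]; ring
  have hSp : S p ≤ S x + (ℓ:ℝ) * ‖x - p‖ := by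
    have h1 : ∀ j, max (T j p) 0 ≤ max (T j x) 0 + ‖x - p‖ := by
      intro j
      have h2 : T j p ≤ T j x + ‖x - p‖ := by
        have := hlipd j p x
        rw [norm_sub_rev] at this
        linarith
      apply max_le
      · have : T j x ≤ max (T j x) 0 := le_max_left _ _
        have h3 : (0:ℝ) ≤ ‖x - p‖ := norm_nonneg _
        linarith
      · have h3 : (0:ℝ) ≤ ‖x - p‖ := norm_nonneg _
        have : (0:ℝ) ≤ max (T j x) 0 := le_max_right _ _
        linarith
    calc S p ≤ ∑ j : Fin ℓ, (max (T j x) 0 + ‖x - p‖) := Finset.sum_le_sum fun j _ => h1 j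
      _ = S x + (ℓ:ℝ) * ‖x - p‖ := by
          rw [Finset.sum_add_distrib, Finset.sum_const, Finset.card_univ, Fintype.card_fin,
            nsmul_eq_mul, hSdef]
  have hfinal : Metric.infDist x P ≤ c' * S x := by
    have h1 : Metric.infDist x P ≤ Metric.infDist p P + dist x p :=
      Metric.infDist_le_infDist_add_dist
    have h2 : Metric.infDist p P ≤ (R / r₀) * S p := hinner p hpA
    have h3 : S p ≤ (1 + (ℓ:ℝ) * C₁) * S x := by
      have : (ℓ:ℝ) * ‖x - p‖ ≤ (ℓ:ℝ) * (C₁ * S x) :=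
        mul_le_mul_of_nonneg_left hxp2 (by positivity)
      calc S p ≤ S x + (ℓ:ℝ) * ‖x - p‖ := hSp
        _ ≤ S x + (ℓ:ℝ) * (C₁ * S x) := by linarith
        _ = (1 + (ℓ:ℝ) * C₁) * S x := by ring
    have h4 : dist x p = ‖x - p‖ := dist_eq_norm x p
    have h5 : Metric.infDist p P ≤ (R / r₀) * ((1 + (ℓ:ℝ) * C₁) * S x) :=
      h2.trans (mul_le_mul_of_nonneg_left h3 (by positivity))
    calc Metric.infDist x P ≤ Metric.infDist p P + dist x p := h1
      _ ≤ (R / r₀) * ((1 + (ℓ:ℝ) * C₁) * S x) + C₁ * S x := by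
          rw [h4]; exact add_le_add h5 hxp2
      _ = c' * S x := by rw [hc'def]; ring
  have : c' * S x ≤ (c' + 1) * S x := by
    have := hS0 x
    nlinarith
  exact hfinal.trans this
end
end
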